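/- arXiv:2012.05771 — 4 statements merged into one kernel-verified Lean document; each statement's English description precedes it below -/
import Mathlib

section
/- Let ν ∈ W^{1,2}(S^1) be a nonnegative function with ∫_{S^1} ν(θ)^2 dθ = 1. If there exists θ₀ with ν(θ₀)^2 ≤ 1/(4π), then (1/2)∫_{S^1} ν'(θ)^2 dθ ≥ (3 - 2√2)/(16π²). -/
open MeasureTheory Metric Real Complex
open scoped Real

lemma cs_interval (f : ℝ → ℝ) (a b : ℝ) (hab : a ≤ b)
    (h1 : IntervalIntegrable f volume a b)
    (h2 : IntervalIntegrable (fun θ => (f θ) ^ 2) volume a b) :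
    (∫ θ in a..b, f θ) ^ 2 ≤ (b - a) * ∫ θ in a..b, (f θ) ^ 2 := by
  rcases eq_or_lt_of_le hab with h | h
  · simp [← h]
  · set L := b - a with hL
    have hL0 : 0 < L := by simp [hL]; linarith
    set m := (∫ θ in a..b, f θ) / L with hm
    have key : 0 ≤ ∫ θ in a..b, (f θ - m) ^ 2 :=
      intervalIntegral.integral_nonneg hab (fun x _ => sq_nonneg _)
    have expand : (∫ θ in a..b, (f θ - m) ^ 2)
        = (∫ θ in a..b, (f θ) ^ 2) - 2 * m * (∫ θ in a..b, f θ) + m ^ 2 * L := by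
      have : ∀ θ, (f θ - m) ^ 2 = (f θ) ^ 2 - (2 * m) * f θ + m ^ 2 := by intro θ; ring
      simp_rw [this]
      rw [intervalIntegral.integral_add (h2.sub (h1.const_mul _)) intervalIntegrable_const,
        intervalIntegral.integral_sub h2 (h1.const_mul _),
        intervalIntegral.integral_const_mul, intervalIntegral.integral_const]
      simp [hL]; ring
    have : (∫ θ in a..b, f θ) ^ 2 / L ≤ ∫ θ in a..b, (f θ) ^ 2 := by
      rw [expand] at key
      have hm' : m * L = ∫ θ in a..b, f θ := by rw [hm, div_mul_cancel₀ _ (ne_of_gt hL0)]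
      rw [← hm'] at key ⊢
      have h1 : (m * L) ^ 2 / L = m ^ 2 * L := by field_simp
      rw [h1]; nlinarith [key]
    calc (∫ θ in a..b, f θ) ^ 2 = ((∫ θ in a..b, f θ) ^ 2 / L) * L := by field_simp
    _ ≤ (∫ θ in a..b, (f θ)^2) * L := by nlinarith
    _ = L * _ := mul_comm _ _

set_option maxHeartbeats 1000000

/-- If `ν ∈ W^{1,2}(S¹)` is nonnegative with `∫ ν² = 1` and `ν(θ₀)² ≤ 1/(4π)`
for some `θ₀`, then the Dirichlet energy `(1/2)∫ ν'² ≥ (3-2√2)/(16π²)`.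
Here `S¹` is `[0,2π]` with endpoints identified: `ν` is `2π`-periodic, and `ν'` is its
(weak) derivative, encoded by the absolute-continuity hypothesis `hAC`. -/
theorem statement0 (ν ν' : ℝ → ℝ)
    (hnonneg : ∀ θ, 0 ≤ ν θ)
    (hper : ∀ θ, ν (θ + 2 * π) = ν θ)
    (hint : ∀ a b : ℝ, IntervalIntegrable ν' volume a b)
    (hint2 : ∀ a b : ℝ, IntervalIntegrable (fun θ => (ν' θ) ^ 2) volume a b)
    (hAC : ∀ a b : ℝ, ν b - ν a = ∫ θ in a..b, ν' θ)
    (hnorm : (∫ θ in (0:ℝ)..(2 * π), (ν θ) ^ 2) = 1)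
    (h0 : ∃ θ₀ : ℝ, (ν θ₀) ^ 2 ≤ 1 / (4 * π)) :
    (3 - 2 * Real.sqrt 2) / (16 * π ^ 2) ≤ (1 / 2) * ∫ θ in (0:ℝ)..(2 * π), (ν' θ) ^ 2 := by
  have hπ : 0 < π := Real.pi_pos
  have h2π : (0:ℝ) < 2 * π := by positivity
  -- ν is continuous
  have hνc : Continuous ν := by
    have heq : ν = fun b => ν 0 + ∫ θ in (0:ℝ)..b, ν' θ := by
      funext b; have := hAC 0 b; linarith
    rw [heq]
    exact continuous_const.add (intervalIntegral.continuous_primitive hint 0)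
  -- max point θ₁
  obtain ⟨θ₁, hθ₁mem, hθ₁max⟩ :=
    (isCompact_Icc (a := (0:ℝ)) (b := 2 * π)).exists_isMaxOn
      (Set.nonempty_Icc.2 (le_of_lt h2π)) hνc.continuousOn
  have hθ₁sq : 1 / (2 * π) ≤ (ν θ₁) ^ 2 := by
    have hmono : (∫ θ in (0:ℝ)..(2 * π), (ν θ) ^ 2)
        ≤ ∫ _ in (0:ℝ)..(2 * π), (ν θ₁) ^ 2 := by
      apply intervalIntegral.integral_mono_on (le_of_lt h2π)
      · exact ((hνc.pow 2).intervalIntegrable _ _)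
      · exact intervalIntegrable_const
      · intro x hx
        exact pow_le_pow_left₀ (hnonneg x) (hθ₁max hx) 2
    rw [hnorm, intervalIntegral.integral_const, smul_eq_mul] at hmono
    rw [div_le_iff₀ h2π]; linarith [hmono]
  -- move θ₀ into [0, 2π)
  obtain ⟨θ₀, hθ₀sq⟩ := h0
  have hperP : Function.Periodic ν (2 * π) := hper
  obtain ⟨θ₀', hθ₀'mem, hθ₀'eq⟩ := hperP.exists_mem_Ico h2π θ₀ 0
  rw [hθ₀'eq] at hθ₀sq
  rw [zero_add] at hθ₀'mem
  -- lower bound on ν θ₁ - ν θ₀'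
  set A := Real.sqrt (1 / (2 * π)) with hAdef
  set B := Real.sqrt (1 / (4 * π)) with hBdef
  have hA : A ≤ ν θ₁ := by
    have := Real.sqrt_le_sqrt hθ₁sq
    rwa [Real.sqrt_sq (hnonneg θ₁)] at this
  have hB : ν θ₀' ≤ B := by
    have := Real.sqrt_le_sqrt hθ₀sq
    rwa [Real.sqrt_sq (hnonneg θ₀')] at this
  have hBA : B ≤ A := Real.sqrt_le_sqrt (by rw [div_le_div_iff₀ (by positivity) h2π]; nlinarith)
  have hAB : A * B = Real.sqrt 2 / (4 * π) := by
    rw [hAdef, hBdef, ← Real.sqrt_mul (by positivity)]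
    rw [show (1 / (2 * π)) * (1 / (4 * π)) = (Real.sqrt 2 / (4 * π)) ^ 2 by
      rw [div_pow, Real.sq_sqrt (by norm_num : (0:ℝ) ≤ 2)]; field_simp; ring]
    exact Real.sqrt_sq (by positivity)
  have hA2 : A ^ 2 = 1 / (2 * π) := Real.sq_sqrt (by positivity)
  have hB2 : B ^ 2 = 1 / (4 * π) := Real.sq_sqrt (by positivity)
  -- squared gap
  have hgap : (3 - 2 * Real.sqrt 2) / (4 * π) ≤ (ν θ₁ - ν θ₀') ^ 2 := by
    have h1 : A - B ≤ ν θ₁ - ν θ₀' := by linarith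
    have h2 : (A - B) ^ 2 ≤ (ν θ₁ - ν θ₀') ^ 2 :=
      pow_le_pow_left₀ (by linarith) h1 2
    have h3 : (A - B) ^ 2 = (3 - 2 * Real.sqrt 2) / (4 * π) := by
      have : (A - B) ^ 2 = A ^ 2 + B ^ 2 - 2 * (A * B) := by ring
      rw [this, hA2, hB2, hAB]; field_simp; ring
    linarith
  -- Cauchy–Schwarz on [a,b] ⊆ [0,2π]
  set a := min θ₀' θ₁ with hadef
  set b := max θ₀' θ₁ with hbdef
  have hab : a ≤ b := min_le_max
  have ha0 : 0 ≤ a := le_min hθ₀'mem.1 hθ₁mem.1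
  have hb2π : b ≤ 2 * π := max_le (le_of_lt hθ₀'mem.2) hθ₁mem.2
  have hsq : (ν b - ν a) ^ 2 = (ν θ₁ - ν θ₀') ^ 2 := by
    rcases le_total θ₀' θ₁ with h | h
    · rw [hadef, hbdef, min_eq_left h, max_eq_right h]
    · rw [hadef, hbdef, min_eq_right h, max_eq_left h]; ring
  have hCS : (ν b - ν a) ^ 2 ≤ (b - a) * ∫ θ in a..b, (ν' θ) ^ 2 := by
    rw [hAC a b]; exact cs_interval ν' a b hab (hint a b) (hint2 a b)
  -- monotonicity of the ν'² integral
  have hpos : ∀ (c d : ℝ), c ≤ d → 0 ≤ ∫ θ in c..d, (ν' θ) ^ 2 := fun c d hcd =>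
    intervalIntegral.integral_nonneg hcd (fun x _ => sq_nonneg _)
  have hsplit : (∫ θ in (0:ℝ)..(2*π), (ν' θ) ^ 2)
      = (∫ θ in (0:ℝ)..a, (ν' θ) ^ 2) + (∫ θ in a..b, (ν' θ) ^ 2)
        + ∫ θ in b..(2*π), (ν' θ) ^ 2 := by
    rw [intervalIntegral.integral_add_adjacent_intervals (hint2 0 a) (hint2 a b),
      intervalIntegral.integral_add_adjacent_intervals (hint2 0 b) (hint2 b (2*π))]
  have hmono2 : (∫ θ in a..b, (ν' θ) ^ 2) ≤ ∫ θ in (0:ℝ)..(2*π), (ν' θ) ^ 2 := by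
    rw [hsplit]; linarith [hpos 0 a ha0, hpos b (2*π) hb2π]
  -- combine
  have hchain : (3 - 2 * Real.sqrt 2) / (4 * π)
      ≤ 2 * π * ∫ θ in (0:ℝ)..(2*π), (ν' θ) ^ 2 := by
    have h1 : (b - a) * (∫ θ in a..b, (ν' θ) ^ 2)
        ≤ 2 * π * ∫ θ in (0:ℝ)..(2*π), (ν' θ) ^ 2 := by
      have := hpos a b hab
      have hba : b - a ≤ 2 * π := by linarith
      nlinarith [hmono2, hpos 0 (2*π) (le_of_lt h2π)]
    calc (3 - 2 * Real.sqrt 2) / (4 * π) ≤ (ν θ₁ - ν θ₀') ^ 2 := hgap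
    _ = (ν b - ν a) ^ 2 := hsq.symm
    _ ≤ (b - a) * ∫ θ in a..b, (ν' θ) ^ 2 := hCS
    _ ≤ _ := h1
  have hs2 : Real.sqrt 2 ≤ 3 / 2 := by
    nlinarith [Real.sq_sqrt (by norm_num : (0:ℝ) ≤ 2), Real.sqrt_nonneg 2]
  rw [div_le_iff₀ (by positivity)] at hchain ⊢
  nlinarith [hchain]
end

section
/- Let ρ_t be a probability measure on S^1 and let H_t(z) = ∫_{S^1} (e^{iθ}+z)/(e^{iθ}−z) dρ_t(θ) be its Herglotz integral on 𝔻. Let g_t solve the Loewner–Kufarev ODE ∂_t g_t(z) = g_t(z) H_t(g_t(z)). Then for z, w ∈ 𝔻 with z ≠ w, setting z_t = g_t(z), w_t = g_t(w), one has, for a.e. t, −∂_t [−log |(z_t − w_t)/(1 − conj(w_t) z_t)|] = ∫_{S^1} P_𝔻(z_t, e^{iθ}) P_𝔻(w_t, e^{iθ}) dρ_t(θ), where P_𝔻(z, e^{iθ}) = (1−|z|²)/|e^{iθ}−z|² is the Poisson kernel of the unit disk. -/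
set_option maxHeartbeats 4000000

open MeasureTheory Metric Real Complex Set
open scoped Real

/-- Herglotz integral of a measure on the circle (parametrized by `θ ∈ ℝ`). -/
noncomputable def herglotz (σ : Measure ℝ) (z : ℂ) : ℂ :=
  ∫ θ, (Complex.exp ((θ : ℂ) * Complex.I) + z) / (Complex.exp ((θ : ℂ) * Complex.I) - z) ∂σ

/-- Poisson kernel of the unit disk: `P_𝔻(z, e^{iθ}) = (1−|z|²)/|e^{iθ}−z|²`. -/
noncomputable def poissonK (z : ℂ) (θ : ℝ) : ℝ :=
  (1 - ‖z‖ ^ 2) / ‖Complex.exp ((θ : ℂ) * Complex.I) - z‖ ^ 2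


lemma hasDerivAt_log_norm {f : ℝ → ℂ} {d : ℂ} {t : ℝ} (hf : HasDerivAt f d t)
    (h0 : f t ≠ 0) :
    HasDerivAt (fun s => Real.log ‖f s‖) ((d / f t).re) t := by
  have hre : HasDerivAt (fun s => (f s).re) d.re t :=
    Complex.reCLM.hasFDerivAt.comp_hasDerivAt t hf
  have him : HasDerivAt (fun s => (f s).im) d.im t :=
    Complex.imCLM.hasFDerivAt.comp_hasDerivAt t hf
  have hN : HasDerivAt (fun s => Complex.normSq (f s))
      (d.re * (f t).re + (f t).re * d.re + (d.im * (f t).im + (f t).im * d.im)) t := by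
    simpa only [Complex.normSq_apply, Pi.mul_def, Pi.add_def] using (hre.mul hre).add (him.mul him)
  have hN0 : Complex.normSq (f t) ≠ 0 := (Complex.normSq_pos.mpr h0).ne'
  have hlog := (Real.hasDerivAt_log hN0).comp t hN
  have heq : (fun s => Real.log ‖f s‖) = fun s => Real.log (Complex.normSq (f s)) / 2 := by
    funext s
    rw [Complex.norm_def, Real.log_sqrt (Complex.normSq_nonneg _)]
  rw [heq]
  refine (hlog.div_const 2).congr_deriv ?_
  rw [Complex.div_re]
  have h2 : Complex.normSq (f t) > 0 := Complex.normSq_pos.mpr h0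
  rw [Complex.normSq_apply] at *
  field_simp
  ring

lemma aux_ident (z w zb wb e : ℂ) (h1 : z - w ≠ 0) (h2 : zb - wb ≠ 0)
    (h3 : e - z ≠ 0) (h4 : e - w ≠ 0) (h5 : 1 - zb * e ≠ 0) (h6 : 1 - wb * e ≠ 0)
    (h7 : 1 - wb * z ≠ 0) (h8 : 1 - w * zb ≠ 0) (he : e ≠ 0) :
    (z / (z - w) + wb * z / (1 - wb * z)) * ((e + z) / (e - z))
      + (-w / (z - w)) * ((e + w) / (e - w))
      + (z * wb / (1 - wb * z)) * ((1 + wb * e) / (1 - wb * e))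
      + ((zb / (zb - wb) + w * zb / (1 - w * zb)) * ((1 + zb * e) / (1 - zb * e))
        + (-wb / (zb - wb)) * ((1 + wb * e) / (1 - wb * e))
        + (zb * w / (1 - w * zb)) * ((e + w) / (e - w)))
    = 2 * ((1 - z * zb) * e / ((e - z) * (1 - zb * e)))
        * ((1 - w * wb) * e / ((e - w) * (1 - wb * e))) := by
  set D := (z - w) * (zb - wb) * (e - z) * (e - w) * (1 - zb * e) * (1 - wb * e)
      * (1 - wb * z) * (1 - w * zb) with hD_def
  have hD : D ≠ 0 := by
    rw [hD_def]
    exact mul_ne_zero (mul_ne_zero (mul_ne_zero (mul_ne_zero (mul_ne_zero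
      (mul_ne_zero (mul_ne_zero h1 h2) h3) h4) h5) h6) h7) h8
  apply mul_right_cancel₀ hD
  have h7' : 1 - z * wb ≠ 0 := by rwa [mul_comm]
  have h8' : 1 - zb * w ≠ 0 := by rwa [mul_comm]
  have hT1 : (z / (z - w) + wb * z / (1 - wb * z)) * ((e + z) / (e - z)) * D
      = (z * (1 - wb * z) + (z - w) * (wb * z)) * (e + z)
        * ((zb - wb) * (e - w) * (1 - zb * e) * (1 - wb * e) * (1 - w * zb)) := by
    rw [hD_def]; field_simp
  have hT2 : (-w / (z - w)) * ((e + w) / (e - w)) * D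
      = (-w) * (e + w)
        * ((zb - wb) * (e - z) * (1 - zb * e) * (1 - wb * e) * (1 - wb * z) * (1 - w * zb)) := by
    rw [hD_def]; field_simp
  have hT3 : (z * wb / (1 - wb * z)) * ((1 + wb * e) / (1 - wb * e)) * D
      = z * wb * (1 + wb * e)
        * ((z - w) * (zb - wb) * (e - z) * (e - w) * (1 - zb * e) * (1 - w * zb)) := by
    rw [hD_def]; field_simp
  have hT4 : (zb / (zb - wb) + w * zb / (1 - w * zb)) * ((1 + zb * e) / (1 - zb * e)) * D
      = (zb * (1 - w * zb) + (zb - wb) * (w * zb)) * (1 + zb * e)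
        * ((z - w) * (e - z) * (e - w) * (1 - wb * e) * (1 - wb * z)) := by
    rw [hD_def]; field_simp
  have hT5 : (-wb / (zb - wb)) * ((1 + wb * e) / (1 - wb * e)) * D
      = (-wb) * (1 + wb * e)
        * ((z - w) * (e - z) * (e - w) * (1 - zb * e) * (1 - wb * z) * (1 - w * zb)) := by
    rw [hD_def]; field_simp
  have hT6 : (zb * w / (1 - w * zb)) * ((e + w) / (e - w)) * D
      = zb * w * (e + w)
        * ((z - w) * (zb - wb) * (e - z) * (1 - zb * e) * (1 - wb * e) * (1 - wb * z)) := by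
    rw [hD_def]; field_simp
  have hR : 2 * ((1 - z * zb) * e / ((e - z) * (1 - zb * e)))
        * ((1 - w * wb) * e / ((e - w) * (1 - wb * e))) * D
      = 2 * ((1 - z * zb) * e) * ((1 - w * wb) * e)
        * ((z - w) * (zb - wb) * (1 - wb * z) * (1 - w * zb)) := by
    rw [hD_def, mul_assoc 2, div_mul_div_comm, mul_div_assoc', div_mul_eq_mul_div,
      div_eq_iff (mul_ne_zero (mul_ne_zero h3 h5) (mul_ne_zero h4 h6))]; ring
  linear_combination hT1 + hT2 + hT3 + hT4 + hT5 + hT6 - hR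

lemma key_identity {z w : ℂ} (hz : ‖z‖ < 1) (hw : ‖w‖ < 1) (hzw : z ≠ w) (θ : ℝ) :
    ((z / (z - w) + (starRingEnd ℂ) w * z / (1 - (starRingEnd ℂ) w * z)) *
        ((Complex.exp ((θ : ℂ) * Complex.I) + z) / (Complex.exp ((θ : ℂ) * Complex.I) - z))
      + (-w / (z - w)) *
        ((Complex.exp ((θ : ℂ) * Complex.I) + w) / (Complex.exp ((θ : ℂ) * Complex.I) - w))
      + (z * (starRingEnd ℂ) w / (1 - (starRingEnd ℂ) w * z)) *
        (starRingEnd ℂ) ((Complex.exp ((θ : ℂ) * Complex.I) + w) /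
          (Complex.exp ((θ : ℂ) * Complex.I) - w))).re
    = poissonK z θ * poissonK w θ := by
  set e := Complex.exp ((θ : ℂ) * Complex.I) with he_def
  have hne : ‖e‖ = 1 := by
    rw [he_def, Complex.norm_exp_ofReal_mul_I]
  have he0 : e ≠ 0 := by
    intro h; rw [h] at hne; simp at hne
  have hce : (starRingEnd ℂ) e = e⁻¹ := by
    rw [he_def, ← Complex.exp_conj, ← Complex.exp_neg]
    congr 1
    simp [Complex.conj_ofReal]
  have hi : e * e⁻¹ = 1 := mul_inv_cancel₀ he0
  have conj_ne : ∀ u : ℂ, u ≠ 0 → (starRingEnd ℂ) u ≠ 0 := fun u h => by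
    simpa using h
  have hez : e - z ≠ 0 := by
    intro h
    have : e = z := by linear_combination h
    rw [this] at hne; exact absurd hne (by linarith [hz])
  have hew : e - w ≠ 0 := by
    intro h
    have : e = w := by linear_combination h
    rw [this] at hne; exact absurd hne (by linarith [hw])
  have hzw0 : z - w ≠ 0 := sub_ne_zero.mpr hzw
  have hzw0' : (starRingEnd ℂ) z - (starRingEnd ℂ) w ≠ 0 := by
    rw [← map_sub]; exact conj_ne _ hzw0
  have h7 : 1 - (starRingEnd ℂ) w * z ≠ 0 := by
    intro h
    have h' : ‖(starRingEnd ℂ) w * z‖ = 1 := by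
      have : (starRingEnd ℂ) w * z = 1 := by linear_combination -h
      rw [this]; simp
    rw [norm_mul] at h'
    simp only [RCLike.norm_conj] at h'
    nlinarith [norm_nonneg z, norm_nonneg w]
  have h8 : 1 - w * (starRingEnd ℂ) z ≠ 0 := by
    intro h
    have h' : ‖w * (starRingEnd ℂ) z‖ = 1 := by
      have : w * (starRingEnd ℂ) z = 1 := by linear_combination -h
      rw [this]; simp
    rw [norm_mul] at h'
    simp only [RCLike.norm_conj] at h'
    nlinarith [norm_nonneg z, norm_nonneg w]
  have hez' : e⁻¹ - (starRingEnd ℂ) z ≠ 0 := by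
    rw [← hce, ← map_sub]; exact conj_ne _ hez
  have hew' : e⁻¹ - (starRingEnd ℂ) w ≠ 0 := by
    rw [← hce, ← map_sub]; exact conj_ne _ hew
  have h5 : 1 - (starRingEnd ℂ) z * e ≠ 0 := by
    have hh : e * (e⁻¹ - (starRingEnd ℂ) z) = 1 - (starRingEnd ℂ) z * e := by
      linear_combination hi
    rw [← hh]; exact mul_ne_zero he0 hez'
  have h6 : 1 - (starRingEnd ℂ) w * e ≠ 0 := by
    have hh : e * (e⁻¹ - (starRingEnd ℂ) w) = 1 - (starRingEnd ℂ) w * e := by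
      linear_combination hi
    rw [← hh]; exact mul_ne_zero he0 hew'
  have hconj_frac : ∀ u : ℂ, e⁻¹ - u ≠ 0 → 1 - u * e ≠ 0 →
      (e⁻¹ + u) / (e⁻¹ - u) = (1 + u * e) / (1 - u * e) := by
    intro u hu hu'
    rw [div_eq_div_iff hu hu']
    linear_combination (-2 * u) * hi
  -- Poisson kernel in complex form
  have hP : ∀ u : ℂ, e - u ≠ 0 → 1 - (starRingEnd ℂ) u * e ≠ 0 →
      ((poissonK u θ : ℝ) : ℂ)
        = (1 - u * (starRingEnd ℂ) u) * e / ((e - u) * (1 - (starRingEnd ℂ) u * e)) := by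
    intro u hu hu'
    rw [poissonK, ← he_def]
    have h2' : (‖u‖ : ℝ) ^ 2 = Complex.normSq u := by
      rw [Complex.sq_norm]
    have h3' : (‖e - u‖ : ℝ) ^ 2 = Complex.normSq (e - u) := by
      rw [Complex.sq_norm]
    rw [h2', h3']
    push_cast
    rw [← Complex.mul_conj, ← Complex.mul_conj, map_sub, hce]
    have hcu' : e⁻¹ - (starRingEnd ℂ) u ≠ 0 := by
      rw [← hce, ← map_sub]; exact conj_ne _ hu
    rw [div_eq_div_iff (mul_ne_zero hu hcu') (mul_ne_zero hu hu')]
    linear_combination (-(1 - u * (starRingEnd ℂ) u) * (e - u)) * hi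
  set X := (z / (z - w) + (starRingEnd ℂ) w * z / (1 - (starRingEnd ℂ) w * z)) *
        ((e + z) / (e - z))
      + (-w / (z - w)) * ((e + w) / (e - w))
      + (z * (starRingEnd ℂ) w / (1 - (starRingEnd ℂ) w * z)) *
        (starRingEnd ℂ) ((e + w) / (e - w)) with hX_def
  have hXc : (starRingEnd ℂ) X =
      ((starRingEnd ℂ) z / ((starRingEnd ℂ) z - (starRingEnd ℂ) w)
          + w * (starRingEnd ℂ) z / (1 - w * (starRingEnd ℂ) z)) *
        ((1 + (starRingEnd ℂ) z * e) / (1 - (starRingEnd ℂ) z * e))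
      + (-(starRingEnd ℂ) w / ((starRingEnd ℂ) z - (starRingEnd ℂ) w)) *
        ((1 + (starRingEnd ℂ) w * e) / (1 - (starRingEnd ℂ) w * e))
      + ((starRingEnd ℂ) z * w / (1 - w * (starRingEnd ℂ) z)) * ((e + w) / (e - w)) := by
    rw [hX_def]
    simp only [map_add, map_mul, map_div₀, map_neg, map_sub, map_one, Complex.conj_conj]
    rw [hce]
    rw [hconj_frac _ hez' h5, hconj_frac _ hew' h6]
  have hXX : X = (z / (z - w) + (starRingEnd ℂ) w * z / (1 - (starRingEnd ℂ) w * z)) *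
        ((e + z) / (e - z))
      + (-w / (z - w)) * ((e + w) / (e - w))
      + (z * (starRingEnd ℂ) w / (1 - (starRingEnd ℂ) w * z)) *
        ((1 + (starRingEnd ℂ) w * e) / (1 - (starRingEnd ℂ) w * e)) := by
    rw [hX_def]
    simp only [map_div₀, map_add, map_sub]
    rw [hce]
    rw [hconj_frac _ hew' h6]
  have hmain : X + (starRingEnd ℂ) X =
      2 * (((poissonK z θ : ℝ) : ℂ) * ((poissonK w θ : ℝ) : ℂ)) := by
    rw [hXc, hXX, hP z hez h5, hP w hew h6]
    have := aux_ident z w ((starRingEnd ℂ) z) ((starRingEnd ℂ) w) e hzw0 hzw0'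
      hez hew h5 h6 h7 h8 he0
    linear_combination this
  rw [Complex.add_conj] at hmain
  have hcast : ((2 * X.re : ℝ) : ℂ) = ((2 * (poissonK z θ * poissonK w θ) : ℝ) : ℂ) := by
    rw [hmain]; push_cast; ring
  have h' := Complex.ofReal_injective hcast
  linarith

lemma integrable_herglotz_kernel {z : ℂ} (hz : ‖z‖ < 1) (σ : Measure ℝ)
    [IsProbabilityMeasure σ] :
    Integrable (fun θ : ℝ =>
      (Complex.exp ((θ : ℂ) * Complex.I) + z) / (Complex.exp ((θ : ℂ) * Complex.I) - z)) σ := by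
  have hcexp : Continuous fun θ : ℝ => Complex.exp ((θ : ℂ) * Complex.I) :=
    (Complex.continuous_ofReal.mul continuous_const).cexp
  have hnorm : ∀ θ : ℝ, ‖Complex.exp ((θ : ℂ) * Complex.I)‖ = 1 := fun θ => by
    rw [Complex.norm_exp_ofReal_mul_I]
  have hden : ∀ θ : ℝ, Complex.exp ((θ : ℂ) * Complex.I) - z ≠ 0 := by
    intro θ h
    have h' : Complex.exp ((θ : ℂ) * Complex.I) = z := by linear_combination h
    have := hnorm θ
    rw [h'] at this
    linarith
  have hcont : Continuous fun θ : ℝ =>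
      (Complex.exp ((θ : ℂ) * Complex.I) + z) / (Complex.exp ((θ : ℂ) * Complex.I) - z) :=
    (hcexp.add continuous_const).div (hcexp.sub continuous_const) hden
  refine (integrable_const ((1 + ‖z‖) / (1 - ‖z‖))).mono'
    hcont.aestronglyMeasurable (ae_of_all _ fun θ => ?_)
  rw [norm_div]
  apply div_le_div₀ (by positivity)
  · calc ‖Complex.exp ((θ : ℂ) * Complex.I) + z‖
        ≤ ‖Complex.exp ((θ : ℂ) * Complex.I)‖ + ‖z‖ := norm_add_le _ _
      _ = 1 + ‖z‖ := by rw [hnorm]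
  · linarith
  · calc (1 : ℝ) - ‖z‖ = ‖Complex.exp ((θ : ℂ) * Complex.I)‖ - ‖z‖ := by rw [hnorm]
      _ ≤ ‖Complex.exp ((θ : ℂ) * Complex.I) - z‖ := norm_sub_norm_le _ _

/-- Hadamard's formula along the Loewner–Kufarev flow.  If `g_t` solves
`∂_t g_t(z) = g_t(z) H_t(g_t(z))` with `H_t` the Herglotz integral of the probability
measure `ρ_t`, then for `z ≠ w` (with `g_t z ≠ g_t w` in `𝔻`), at a time `t` where the
ODE holds, `−∂_t G_𝔻(g_t z, g_t w) = ∫ P_𝔻(g_t z, e^{iθ}) P_𝔻(g_t w, e^{iθ}) dρ_t(θ)`,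
where `G_𝔻(z,w) = −log |(z−w)/(1−w̄z)|`. -/
theorem statement4 (ρ : ℝ → Measure ℝ) (hprob : ∀ t, IsProbabilityMeasure (ρ t))
    (g : ℝ → ℂ → ℂ) (z w : ℂ) (t : ℝ)
    (hzw : z ≠ w)
    (hz : g t z ∈ ball (0:ℂ) 1) (hw : g t w ∈ ball (0:ℂ) 1)
    (hzw' : g t z ≠ g t w)
    (hdz : HasDerivAt (fun s => g s z) (g t z * herglotz (ρ t) (g t z)) t)
    (hdw : HasDerivAt (fun s => g s w) (g t w * herglotz (ρ t) (g t w)) t) :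
    HasDerivAt
      (fun s => Real.log ‖(g s z - g s w) / (1 - (starRingEnd ℂ) (g s w) * g s z)‖)
      (∫ θ, poissonK (g t z) θ * poissonK (g t w) θ ∂(ρ t)) t := by
  haveI := hprob t
  have hz1 : ‖g t z‖ < 1 := by simpa [mem_ball_zero_iff] using hz
  have hw1 : ‖g t w‖ < 1 := by simpa [mem_ball_zero_iff] using hw
  set zt := g t z with hzt
  set wt := g t w with hwt
  set a := herglotz (ρ t) zt with ha
  set b := herglotz (ρ t) wt with hb
  -- nonvanishing
  have hN0 : zt - wt ≠ 0 := sub_ne_zero.mpr hzw'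
  have hD0 : 1 - (starRingEnd ℂ) wt * zt ≠ 0 := by
    intro h
    have h' : ‖(starRingEnd ℂ) wt * zt‖ = 1 := by
      have : (starRingEnd ℂ) wt * zt = 1 := by linear_combination -h
      rw [this]; simp
    rw [norm_mul] at h'
    simp only [RCLike.norm_conj] at h'
    nlinarith [norm_nonneg zt, norm_nonneg wt]
  -- derivatives
  have hconj : HasDerivAt (fun s => (starRingEnd ℂ) (g s w))
      ((starRingEnd ℂ) (wt * b)) t := by
    simpa only [starRingEnd_apply] using hdw.star
  have hN : HasDerivAt (fun s => g s z - g s w) (zt * a - wt * b) t := hdz.sub hdw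
  have hDen : HasDerivAt (fun s => 1 - (starRingEnd ℂ) (g s w) * g s z)
      (-((starRingEnd ℂ) (wt * b) * zt + (starRingEnd ℂ) wt * (zt * a))) t :=
    (hconj.mul hdz).const_sub 1
  have hf : HasDerivAt (fun s => (g s z - g s w) / (1 - (starRingEnd ℂ) (g s w) * g s z))
      (((zt * a - wt * b) * (1 - (starRingEnd ℂ) wt * zt)
          - (zt - wt) * -((starRingEnd ℂ) (wt * b) * zt + (starRingEnd ℂ) wt * (zt * a)))
        / (1 - (starRingEnd ℂ) wt * zt) ^ 2) t := hN.div hDen hD0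
  have hf0 : zt / 1 ≠ 0 → True := fun _ => trivial
  have hft : (zt - wt) / (1 - (starRingEnd ℂ) wt * zt) ≠ 0 := div_ne_zero hN0 hD0
  have hlog := hasDerivAt_log_norm hf hft
  -- the coefficients
  set c1 := zt / (zt - wt) + (starRingEnd ℂ) wt * zt / (1 - (starRingEnd ℂ) wt * zt) with hc1
  set c2 := -wt / (zt - wt) with hc2
  set c3 := zt * (starRingEnd ℂ) wt / (1 - (starRingEnd ℂ) wt * zt) with hc3
  have hVal : (((zt * a - wt * b) * (1 - (starRingEnd ℂ) wt * zt)
          - (zt - wt) * -((starRingEnd ℂ) (wt * b) * zt + (starRingEnd ℂ) wt * (zt * a)))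
        / (1 - (starRingEnd ℂ) wt * zt) ^ 2)
        / ((zt - wt) / (1 - (starRingEnd ℂ) wt * zt))
      = c1 * a + c2 * b + c3 * (starRingEnd ℂ) b := by
    rw [hc1, hc2, hc3, map_mul]
    have hD0' : 1 - zt * (starRingEnd ℂ) wt ≠ 0 := by rwa [mul_comm]
    field_simp
    ring
  -- integrals
  have hintz := integrable_herglotz_kernel hz1 (ρ t)
  have hintw := integrable_herglotz_kernel hw1 (ρ t)
  have hintwc : Integrable (fun θ : ℝ => (starRingEnd ℂ)
      ((Complex.exp ((θ : ℂ) * Complex.I) + wt) / (Complex.exp ((θ : ℂ) * Complex.I) - wt)))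
      (ρ t) := by
    refine hintw.norm.mono' (continuous_star.comp_aestronglyMeasurable
      hintw.aestronglyMeasurable) (ae_of_all _ fun θ => ?_)
    rw [RCLike.norm_conj]
  have hIa : ∫ θ, c1 * ((Complex.exp ((θ : ℂ) * Complex.I) + zt)
        / (Complex.exp ((θ : ℂ) * Complex.I) - zt)) ∂(ρ t) = c1 * a := by
    rw [integral_const_mul, ha, herglotz]
  have hIb : ∫ θ, c2 * ((Complex.exp ((θ : ℂ) * Complex.I) + wt)
        / (Complex.exp ((θ : ℂ) * Complex.I) - wt)) ∂(ρ t) = c2 * b := by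
    rw [integral_const_mul, hb, herglotz]
  have hIc : ∫ θ, c3 * (starRingEnd ℂ) ((Complex.exp ((θ : ℂ) * Complex.I) + wt)
        / (Complex.exp ((θ : ℂ) * Complex.I) - wt)) ∂(ρ t) = c3 * (starRingEnd ℂ) b := by
    rw [integral_const_mul, integral_conj, hb, herglotz]
  have hintA : Integrable (fun θ : ℝ =>
      c1 * ((Complex.exp ((θ : ℂ) * Complex.I) + zt) / (Complex.exp ((θ : ℂ) * Complex.I) - zt))
      + c2 * ((Complex.exp ((θ : ℂ) * Complex.I) + wt) / (Complex.exp ((θ : ℂ) * Complex.I) - wt))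
      + c3 * (starRingEnd ℂ) ((Complex.exp ((θ : ℂ) * Complex.I) + wt)
          / (Complex.exp ((θ : ℂ) * Complex.I) - wt))) (ρ t) :=
    ((hintz.const_mul c1).add (hintw.const_mul c2)).add (hintwc.const_mul c3)
  have hIsum : ∫ θ, (c1 * ((Complex.exp ((θ : ℂ) * Complex.I) + zt)
        / (Complex.exp ((θ : ℂ) * Complex.I) - zt))
      + c2 * ((Complex.exp ((θ : ℂ) * Complex.I) + wt)
          / (Complex.exp ((θ : ℂ) * Complex.I) - wt))
      + c3 * (starRingEnd ℂ) ((Complex.exp ((θ : ℂ) * Complex.I) + wt)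
          / (Complex.exp ((θ : ℂ) * Complex.I) - wt))) ∂(ρ t)
      = c1 * a + c2 * b + c3 * (starRingEnd ℂ) b := by
    have h12 : Integrable (fun θ : ℝ =>
        c1 * ((Complex.exp ((θ : ℂ) * Complex.I) + zt) / (Complex.exp ((θ : ℂ) * Complex.I) - zt))
        + c2 * ((Complex.exp ((θ : ℂ) * Complex.I) + wt)
            / (Complex.exp ((θ : ℂ) * Complex.I) - wt))) (ρ t) :=
      (hintz.const_mul c1).add (hintw.const_mul c2)
    have h3 : Integrable (fun θ : ℝ =>
        c3 * (starRingEnd ℂ) ((Complex.exp ((θ : ℂ) * Complex.I) + wt)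
            / (Complex.exp ((θ : ℂ) * Complex.I) - wt))) (ρ t) :=
      hintwc.const_mul c3
    have h1' : Integrable (fun θ : ℝ =>
        c1 * ((Complex.exp ((θ : ℂ) * Complex.I) + zt)
            / (Complex.exp ((θ : ℂ) * Complex.I) - zt))) (ρ t) := hintz.const_mul c1
    have h2' : Integrable (fun θ : ℝ =>
        c2 * ((Complex.exp ((θ : ℂ) * Complex.I) + wt)
            / (Complex.exp ((θ : ℂ) * Complex.I) - wt))) (ρ t) := hintw.const_mul c2
    rw [integral_add h12 h3, integral_add h1' h2', hIa, hIb, hIc]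
  have hPP : ∫ θ, poissonK zt θ * poissonK wt θ ∂(ρ t)
      = (c1 * a + c2 * b + c3 * (starRingEnd ℂ) b).re := by
    have hpt : ∀ θ : ℝ, poissonK zt θ * poissonK wt θ
        = (c1 * ((Complex.exp ((θ : ℂ) * Complex.I) + zt)
            / (Complex.exp ((θ : ℂ) * Complex.I) - zt))
          + c2 * ((Complex.exp ((θ : ℂ) * Complex.I) + wt)
              / (Complex.exp ((θ : ℂ) * Complex.I) - wt))
          + c3 * (starRingEnd ℂ) ((Complex.exp ((θ : ℂ) * Complex.I) + wt)
              / (Complex.exp ((θ : ℂ) * Complex.I) - wt))).re := by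
      intro θ
      rw [hc1, hc2, hc3]
      exact (key_identity hz1 hw1 hzw' θ).symm
    calc ∫ θ, poissonK zt θ * poissonK wt θ ∂(ρ t)
        = ∫ θ, (c1 * ((Complex.exp ((θ : ℂ) * Complex.I) + zt)
            / (Complex.exp ((θ : ℂ) * Complex.I) - zt))
          + c2 * ((Complex.exp ((θ : ℂ) * Complex.I) + wt)
              / (Complex.exp ((θ : ℂ) * Complex.I) - wt))
          + c3 * (starRingEnd ℂ) ((Complex.exp ((θ : ℂ) * Complex.I) + wt)
              / (Complex.exp ((θ : ℂ) * Complex.I) - wt))).re ∂(ρ t) := by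
          exact integral_congr_ae (ae_of_all _ fun θ => hpt θ)
      _ = (c1 * a + c2 * b + c3 * (starRingEnd ℂ) b).re := by
          simp only [← RCLike.re_to_complex]
          rw [integral_re hintA, hIsum]
  convert hlog using 1
  rw [hPP, ← hzt, ← hwt, hVal]
end

section
/- The map σ ↦ L(σ) on probability measures on S^1, where L(σ) = (1/2)∫_{S^1} ν'(θ)² dθ if dσ = ν² dθ with nonnegative ν ∈ W^{1,2}(S^1) and L(σ) = +∞ otherwise, is convex: for σ₁, σ₂ probability measures and λ ∈ [0,1], L(λσ₁ + (1−λ)σ₂) ≤ λL(σ₁) + (1−λ)L(σ₂). -/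
open MeasureTheory Metric Real Complex Set
open scoped Real ENNReal NNReal

/-- The Loewner–Kufarev local energy `L(σ)` of a measure `σ` on the circle
(`S¹ = [0,2π)`): it equals `(1/2)∫_{S¹} ν'(θ)² dθ` if `dσ = ν² dθ` for a nonnegative
`ν ∈ W^{1,2}(S¹)` (with weak derivative `ν'`), and `+∞` otherwise.  It is defined as an
infimum over all such representations (the infimum over the empty set being `⊤`). -/
noncomputable def circleL (σ : Measure ℝ) : ℝ≥0∞ :=
  ⨅ (ν : ℝ → ℝ) (ν' : ℝ → ℝ)
    (_ : (∀ θ, 0 ≤ ν θ) ∧ (∀ θ, ν (θ + 2 * π) = ν θ) ∧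
      (∀ a b : ℝ, IntervalIntegrable ν' volume a b) ∧
      (∀ a b : ℝ, IntervalIntegrable (fun θ => (ν' θ) ^ 2) volume a b) ∧
      (∀ a b : ℝ, ν b - ν a = ∫ θ in a..b, ν' θ) ∧
      σ = (volume.restrict (Set.Ico (0:ℝ) (2 * π))).withDensity
            (fun θ => ENNReal.ofReal ((ν θ) ^ 2))),
    ENNReal.ofReal ((1 / 2) * ∫ θ in (0:ℝ)..(2 * π), (ν' θ) ^ 2)


set_option maxHeartbeats 1000000

section helpers
lemma cs_abs {t s : ℝ} (ht : 0 ≤ t) (hs : 0 ≤ s) (a b c d : ℝ) :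
    |t*a*b + s*c*d| ≤ Real.sqrt (t*a^2+s*c^2) * Real.sqrt (t*b^2+s*d^2) := by
  have h1 : (0:ℝ) ≤ t*a^2+s*c^2 := by positivity
  have key : (t*a*b + s*c*d)^2 ≤ (t*a^2+s*c^2) * (t*b^2+s*d^2) := by
    nlinarith [sq_nonneg (a*d - b*c), mul_nonneg ht hs]
  calc |t*a*b + s*c*d| = Real.sqrt ((t*a*b+s*c*d)^2) := (Real.sqrt_sq_eq_abs _).symm
    _ ≤ Real.sqrt ((t*a^2+s*c^2)*(t*b^2+s*d^2)) := Real.sqrt_le_sqrt key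
    _ = _ := Real.sqrt_mul h1 _

lemma sqrt_two_add {t s : ℝ} (ht : 0 ≤ t) (hs : 0 ≤ s) (b d : ℝ) :
    Real.sqrt (t*b^2 + s*d^2) ≤ Real.sqrt t * |b| + Real.sqrt s * |d| := by
  have h1 : Real.sqrt t * |b| = Real.sqrt (t*b^2) := by
    rw [Real.sqrt_mul ht, Real.sqrt_sq_eq_abs]
  have h2 : Real.sqrt s * |d| = Real.sqrt (s*d^2) := by
    rw [Real.sqrt_mul hs, Real.sqrt_sq_eq_abs]
  rw [h1, h2]
  have hx : (0:ℝ) ≤ t*b^2 := by positivity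
  have hy : (0:ℝ) ≤ s*d^2 := by positivity
  have h3 : t*b^2 + s*d^2 ≤ (Real.sqrt (t*b^2) + Real.sqrt (s*d^2))^2 := by
    have e1 := Real.sq_sqrt hx
    have e2 := Real.sq_sqrt hy
    nlinarith [Real.sqrt_nonneg (t*b^2), Real.sqrt_nonneg (s*d^2),
      mul_nonneg (Real.sqrt_nonneg (t*b^2)) (Real.sqrt_nonneg (s*d^2))]
  calc Real.sqrt (t*b^2 + s*d^2) ≤ Real.sqrt ((Real.sqrt (t*b^2) + Real.sqrt (s*d^2))^2) :=
        Real.sqrt_le_sqrt h3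
    _ = _ := by rw [Real.sqrt_sq (by positivity)]


lemma abs_add_four (a b c d : ℝ) : |a + b + c + d| ≤ |a| + |b| + |c| + |d| := by
  calc |a + b + c + d| ≤ |a + b + c| + |d| := abs_add_le _ _
    _ ≤ (|a + b| + |c|) + |d| := by gcongr; exact abs_add_le _ _
    _ ≤ ((|a| + |b|) + |c|) + |d| := by gcongr; exact abs_add_le _ _

lemma sqrt_diff' {ε : ℝ} (hε : 0 < ε) {A B : ℝ} (hA : 0 ≤ A) (hB : 0 ≤ B) :
    |Real.sqrt (A + ε^2) - Real.sqrt (B + ε^2)| ≤ |A - B| / (2*ε) := by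
  set x := Real.sqrt (A + ε^2) with hxdef
  set y := Real.sqrt (B + ε^2) with hydef
  have hx2 : x^2 = A + ε^2 := Real.sq_sqrt (by positivity)
  have hy2 : y^2 = B + ε^2 := Real.sq_sqrt (by positivity)
  have hx : ε ≤ x := by
    rw [hxdef]
    calc ε = Real.sqrt (ε^2) := (Real.sqrt_sq hε.le).symm
      _ ≤ _ := Real.sqrt_le_sqrt (by linarith)
  have hy : ε ≤ y := by
    rw [hydef]
    calc ε = Real.sqrt (ε^2) := (Real.sqrt_sq hε.le).symm
      _ ≤ _ := Real.sqrt_le_sqrt (by linarith)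
  rw [le_div_iff₀ (by positivity)]
  have key : |x - y| * (x + y) = |A - B| := by
    rw [← _root_.abs_of_nonneg (by linarith : (0:ℝ) ≤ x + y), ← abs_mul]
    congr 1
    nlinarith
  calc |x - y| * (2*ε) ≤ |x - y| * (x + y) := by
        apply mul_le_mul_of_nonneg_left (by linarith) (abs_nonneg _)
    _ = |A - B| := key
end helpers

lemma L0 {t s : ℝ} (ht : 0 ≤ t) (hs : 0 ≤ s) {ν₁ ν₂ ν₁' ν₂' : ℝ → ℝ}
    (hc₁ : Continuous ν₁) (hc₂ : Continuous ν₂)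
    (hI₁ : ∀ a b : ℝ, IntervalIntegrable ν₁' volume a b)
    (hI₂ : ∀ a b : ℝ, IntervalIntegrable ν₂' volume a b)
    (hF₁ : ∀ a b : ℝ, ν₁ b - ν₁ a = ∫ x in a..b, ν₁' x)
    (hF₂ : ∀ a b : ℝ, ν₂ b - ν₂ a = ∫ x in a..b, ν₂' x)
    {ε : ℝ} (hε : 0 < ε) {a b : ℝ} (hab : a ≤ b) :
    Real.sqrt (t*(ν₁ b)^2 + s*(ν₂ b)^2 + ε^2) - Real.sqrt (t*(ν₁ a)^2 + s*(ν₂ a)^2 + ε^2)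
      = ∫ x in a..b, (t*ν₁ x*ν₁' x + s*ν₂ x*ν₂' x)
          / Real.sqrt (t*(ν₁ x)^2 + s*(ν₂ x)^2 + ε^2) := by
  set Ψ : ℝ → ℝ := fun x => Real.sqrt (t*(ν₁ x)^2 + s*(ν₂ x)^2 + ε^2) with hΨdef
  set w : ℝ → ℝ := fun x => t*ν₁ x*ν₁' x + s*ν₂ x*ν₂' x with hwdef
  have hΨc : Continuous Ψ := by
    apply Continuous.sqrt; fun_prop
  have hΨε : ∀ x, ε ≤ Ψ x := by
    intro x
    have h0 : (0:ℝ) ≤ t*(ν₁ x)^2 + s*(ν₂ x)^2 := by positivity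
    calc ε = Real.sqrt (ε^2) := (Real.sqrt_sq hε.le).symm
      _ ≤ _ := Real.sqrt_le_sqrt (by linarith)
  have hΨpos : ∀ x, 0 < Ψ x := fun x => lt_of_lt_of_le hε (hΨε x)
  -- bound for ν₁ ν₂ on Icc a b
  obtain ⟨M₁, hM₁⟩ := (isCompact_Icc : IsCompact (Icc a b)).exists_bound_of_continuousOn
    hc₁.continuousOn
  obtain ⟨M₂, hM₂⟩ := (isCompact_Icc : IsCompact (Icc a b)).exists_bound_of_continuousOn
    hc₂.continuousOn
  set M : ℝ := max 0 (max M₁ M₂) with hMdef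
  have hM0 : (0:ℝ) ≤ M := le_max_left _ _
  have hMb₁ : ∀ x ∈ Icc a b, |ν₁ x| ≤ M := by
    intro x hx
    have := hM₁ x hx
    rw [Real.norm_eq_abs] at this
    exact this.trans ((le_max_left _ _).trans (le_max_right _ _))
  have hMb₂ : ∀ x ∈ Icc a b, |ν₂ x| ≤ M := by
    intro x hx
    have := hM₂ x hx
    rw [Real.norm_eq_abs] at this
    exact this.trans ((le_max_right _ _).trans (le_max_right _ _))
  set A₁ : ℝ := ∫ x in a..b, |ν₁' x| with hA₁def
  set A₂ : ℝ := ∫ x in a..b, |ν₂' x| with hA₂def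
  have hA₁0 : 0 ≤ A₁ := intervalIntegral.integral_nonneg hab (fun x _ => abs_nonneg _)
  have hA₂0 : 0 ≤ A₂ := intervalIntegral.integral_nonneg hab (fun x _ => abs_nonneg _)
  -- integrability of w and w/Ψ
  have hwII : IntervalIntegrable w volume a b := by
    apply IntervalIntegrable.add
    · exact ((hI₁ a b).continuousOn_mul ((continuous_const.mul hc₁).continuousOn))
    · exact ((hI₂ a b).continuousOn_mul ((continuous_const.mul hc₂).continuousOn))
  have huIoc : Set.uIoc a b = Set.Ioc a b := uIoc_of_le hab
  have hwm : AEStronglyMeasurable w (volume.restrict (Set.uIoc a b)) := by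
    rw [huIoc]; exact hwII.1.aestronglyMeasurable
  have hΨm : AEStronglyMeasurable Ψ (volume.restrict (Set.uIoc a b)) :=
    (hΨc.aestronglyMeasurable).restrict
  have habs1 : IntervalIntegrable (fun x => |w x|) volume a b := hwII.abs
  have habs : IntervalIntegrable (fun x => |w x| / ε) volume a b := habs1.div_const ε
  have hwΨm : AEStronglyMeasurable (fun x => w x / Ψ x) (volume.restrict (Set.uIoc a b)) :=
    (hwm.aemeasurable.div hΨm.aemeasurable).aestronglyMeasurable
  have hle : ∀ x : ℝ, ‖w x / Ψ x‖ ≤ |w x| / ε := by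
    intro x
    rw [Real.norm_eq_abs, abs_div, _root_.abs_of_pos (hΨpos x)]
    exact div_le_div_of_nonneg_left (abs_nonneg _) hε (hΨε x)
  have hwΨII : IntervalIntegrable (fun x => w x / Ψ x) volume a b :=
    habs.mono_fun' hwΨm (Filter.Eventually.of_forall hle)
  -- the constant
  set K : ℝ := (t+s)*(2*M+1)/ε + (t*(M+1+A₁)+s*(M+1+A₂))/ε
      + (t+s)*(2*M+1)*(M*(t*A₁+s*A₂))/(2*ε^3) with hKdef
  have hK0 : 0 ≤ K := by
    have h1 : (0:ℝ) ≤ (t+s)*(2*M+1)/ε := by positivity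
    have h2 : (0:ℝ) ≤ (t*(M+1+A₁)+s*(M+1+A₂))/ε := by positivity
    have h3 : (0:ℝ) ≤ (t+s)*(2*M+1)*(M*(t*A₁+s*A₂))/(2*ε^3) := by positivity
    rw [hKdef]; linarith
  have main : ∀ δ : ℝ, 0 < δ → δ ≤ 1 →
      |Ψ b - Ψ a - ∫ x in a..b, w x / Ψ x| ≤ K*δ := by
    intro δ hδ hδ1
    -- continuous approximations of ν₁' and ν₂'
    have hind₁ : Integrable ((Set.Ioc a b).indicator ν₁') volume :=
      (hI₁ a b).1.integrable_indicator measurableSet_Ioc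
    have hind₂ : Integrable ((Set.Ioc a b).indicator ν₂') volume :=
      (hI₂ a b).1.integrable_indicator measurableSet_Ioc
    obtain ⟨g₁, -, hg₁near, hg₁c, hg₁int⟩ := hind₁.exists_hasCompactSupport_integral_sub_le hδ
    obtain ⟨g₂, -, hg₂near, hg₂c, hg₂int⟩ := hind₂.exists_hasCompactSupport_integral_sub_le hδ
    -- L¹ error bounds
    have hE₁ : ∫ x in a..b, |g₁ x - ν₁' x| ≤ δ := by
      rw [intervalIntegral.integral_of_le hab]
      calc ∫ x in Set.Ioc a b, |g₁ x - ν₁' x|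
          = ∫ x in Set.Ioc a b, ‖(Set.Ioc a b).indicator ν₁' x - g₁ x‖ := by
            apply setIntegral_congr_fun measurableSet_Ioc
            intro x hx
            show |g₁ x - ν₁' x| = ‖(Set.Ioc a b).indicator ν₁' x - g₁ x‖
            rw [Set.indicator_of_mem hx, Real.norm_eq_abs, abs_sub_comm]
        _ ≤ ∫ x, ‖(Set.Ioc a b).indicator ν₁' x - g₁ x‖ :=
            setIntegral_le_integral ((hind₁.sub hg₁int).norm)
              (Filter.Eventually.of_forall fun x => norm_nonneg _)
        _ ≤ δ := hg₁near
    have hE₂ : ∫ x in a..b, |g₂ x - ν₂' x| ≤ δ := by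
      rw [intervalIntegral.integral_of_le hab]
      calc ∫ x in Set.Ioc a b, |g₂ x - ν₂' x|
          = ∫ x in Set.Ioc a b, ‖(Set.Ioc a b).indicator ν₂' x - g₂ x‖ := by
            apply setIntegral_congr_fun measurableSet_Ioc
            intro x hx
            show |g₂ x - ν₂' x| = ‖(Set.Ioc a b).indicator ν₂' x - g₂ x‖
            rw [Set.indicator_of_mem hx, Real.norm_eq_abs, abs_sub_comm]
        _ ≤ ∫ x, ‖(Set.Ioc a b).indicator ν₂' x - g₂ x‖ :=
            setIntegral_le_integral ((hind₂.sub hg₂int).norm)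
              (Filter.Eventually.of_forall fun x => norm_nonneg _)
        _ ≤ δ := hg₂near
    -- the C¹ approximants
    set N₁ : ℝ → ℝ := fun x => ν₁ a + ∫ u in a..x, g₁ u with hN₁def
    set N₂ : ℝ → ℝ := fun x => ν₂ a + ∫ u in a..x, g₂ u with hN₂def
    have hN₁d : ∀ x, HasDerivAt N₁ (g₁ x) x := fun x =>
      ((hg₁c.integral_hasStrictDerivAt a x).hasDerivAt).const_add (ν₁ a)
    have hN₂d : ∀ x, HasDerivAt N₂ (g₂ x) x := fun x =>
      ((hg₂c.integral_hasStrictDerivAt a x).hasDerivAt).const_add (ν₂ a)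
    have hN₁c : Continuous N₁ :=
      continuous_const.add (intervalIntegral.continuous_primitive
        (fun c d => hg₁c.intervalIntegrable c d) a)
    have hN₂c : Continuous N₂ :=
      continuous_const.add (intervalIntegral.continuous_primitive
        (fun c d => hg₂c.intervalIntegrable c d) a)
    have hN₁cl : ∀ x ∈ Set.Icc a b, |N₁ x - ν₁ x| ≤ δ := by
      intro x hx
      have e : N₁ x - ν₁ x = ∫ u in a..x, (g₁ u - ν₁' u) := by
        have h := hF₁ a x
        rw [intervalIntegral.integral_sub (hg₁c.intervalIntegrable a x) (hI₁ a x)]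
        simp only [hN₁def]
        linarith
      rw [e]
      calc |∫ u in a..x, (g₁ u - ν₁' u)| ≤ ∫ u in a..x, |g₁ u - ν₁' u| :=
            intervalIntegral.abs_integral_le_integral_abs hx.1
        _ ≤ ∫ u in a..b, |g₁ u - ν₁' u| :=
            intervalIntegral.integral_mono_interval le_rfl hx.1 hx.2
              (Filter.Eventually.of_forall fun x => abs_nonneg _)
              ((hg₁c.intervalIntegrable a b).sub (hI₁ a b)).abs
        _ ≤ δ := hE₁
    have hN₂cl : ∀ x ∈ Set.Icc a b, |N₂ x - ν₂ x| ≤ δ := by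
      intro x hx
      have e : N₂ x - ν₂ x = ∫ u in a..x, (g₂ u - ν₂' u) := by
        have h := hF₂ a x
        rw [intervalIntegral.integral_sub (hg₂c.intervalIntegrable a x) (hI₂ a x)]
        simp only [hN₂def]
        linarith
      rw [e]
      calc |∫ u in a..x, (g₂ u - ν₂' u)| ≤ ∫ u in a..x, |g₂ u - ν₂' u| :=
            intervalIntegral.abs_integral_le_integral_abs hx.1
        _ ≤ ∫ u in a..b, |g₂ u - ν₂' u| :=
            intervalIntegral.integral_mono_interval le_rfl hx.1 hx.2
              (Filter.Eventually.of_forall fun x => abs_nonneg _)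
              ((hg₂c.intervalIntegrable a b).sub (hI₂ a b)).abs
        _ ≤ δ := hE₂
    have hN₁b : ∀ x ∈ Set.Icc a b, |N₁ x| ≤ M + 1 := by
      intro x hx
      have h1 := abs_sub_abs_le_abs_sub (N₁ x) (ν₁ x)
      have h2 := hMb₁ x hx
      have h3 := hN₁cl x hx
      linarith
    have hN₂b : ∀ x ∈ Set.Icc a b, |N₂ x| ≤ M + 1 := by
      intro x hx
      have h1 := abs_sub_abs_le_abs_sub (N₂ x) (ν₂ x)
      have h2 := hMb₂ x hx
      have h3 := hN₂cl x hx
      linarith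
    set Φ : ℝ → ℝ := fun x => Real.sqrt (t*(N₁ x)^2 + s*(N₂ x)^2 + ε^2) with hΦdef
    have hΦε : ∀ x, ε ≤ Φ x := by
      intro x
      have h0 : (0:ℝ) ≤ t*(N₁ x)^2 + s*(N₂ x)^2 := by positivity
      calc ε = Real.sqrt (ε^2) := (Real.sqrt_sq hε.le).symm
        _ ≤ _ := Real.sqrt_le_sqrt (by linarith)
    have hΦpos : ∀ x, 0 < Φ x := fun x => lt_of_lt_of_le hε (hΦε x)
    have hΦc : Continuous Φ := by
      apply Continuous.sqrt; fun_prop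
    set D : ℝ → ℝ := fun x => (t*N₁ x*g₁ x + s*N₂ x*g₂ x) / Φ x with hDdef
    have hDc : Continuous D := by
      apply Continuous.div ?_ hΦc (fun x => (hΦpos x).ne')
      fun_prop
    have hΦd : ∀ x, HasDerivAt Φ (D x) x := by
      intro x
      have h1 : HasDerivAt (fun y => (N₁ y)^2) (2*N₁ x*g₁ x) x := by
        have h := (hN₁d x).fun_pow 2
        exact h.congr_deriv (by simp)
      have h2 : HasDerivAt (fun y => (N₂ y)^2) (2*N₂ x*g₂ x) x := by
        have h := (hN₂d x).fun_pow 2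
        exact h.congr_deriv (by simp)
      have hinner : HasDerivAt (fun y => t*(N₁ y)^2 + s*(N₂ y)^2 + ε^2)
          (2*(t*N₁ x*g₁ x + s*N₂ x*g₂ x)) x := by
        have h := ((h1.const_mul t).add (h2.const_mul s)).add_const (ε^2)
        exact h.congr_deriv (by ring)
      have hne : t*(N₁ x)^2 + s*(N₂ x)^2 + ε^2 ≠ 0 := by positivity
      have h := hinner.sqrt hne
      convert h using 1
      rw [hDdef, hΦdef]
      show (t*N₁ x*g₁ x + s*N₂ x*g₂ x) / Real.sqrt (t*(N₁ x)^2 + s*(N₂ x)^2 + ε^2)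
        = 2*(t*N₁ x*g₁ x + s*N₂ x*g₂ x) / (2*Real.sqrt (t*(N₁ x)^2 + s*(N₂ x)^2 + ε^2))
      rw [mul_div_mul_left _ _ (two_ne_zero (α := ℝ))]
    have hFTC : ∫ x in a..b, D x = Φ b - Φ a :=
      intervalIntegral.integral_eq_sub_of_hasDerivAt (fun x _ => hΦd x)
        (hDc.intervalIntegrable a b)
    -- endpoint estimates
    have hXY : ∀ x ∈ Set.Icc a b,
        |t*(ν₁ x)^2 + s*(ν₂ x)^2 - (t*(N₁ x)^2 + s*(N₂ x)^2)| ≤ (t+s)*(2*M+1)*δ := by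
      intro x hx
      have e₁ : |(ν₁ x)^2 - (N₁ x)^2| ≤ (2*M+1)*δ := by
        have h3 : |ν₁ x - N₁ x| ≤ δ := by rw [abs_sub_comm]; exact hN₁cl x hx
        have h4 : |ν₁ x + N₁ x| ≤ 2*M+1 := by
          have h5 := abs_add_le (ν₁ x) (N₁ x)
          have h6 := hMb₁ x hx
          have h7 := hN₁b x hx
          linarith
        calc |(ν₁ x)^2 - (N₁ x)^2| = |ν₁ x - N₁ x| * |ν₁ x + N₁ x| := by
              rw [← abs_mul]; congr 1; ring
          _ ≤ δ * (2*M+1) := mul_le_mul h3 h4 (abs_nonneg _) hδ.le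
          _ = (2*M+1)*δ := by ring
      have e₂ : |(ν₂ x)^2 - (N₂ x)^2| ≤ (2*M+1)*δ := by
        have h3 : |ν₂ x - N₂ x| ≤ δ := by rw [abs_sub_comm]; exact hN₂cl x hx
        have h4 : |ν₂ x + N₂ x| ≤ 2*M+1 := by
          have h5 := abs_add_le (ν₂ x) (N₂ x)
          have h6 := hMb₂ x hx
          have h7 := hN₂b x hx
          linarith
        calc |(ν₂ x)^2 - (N₂ x)^2| = |ν₂ x - N₂ x| * |ν₂ x + N₂ x| := by
              rw [← abs_mul]; congr 1; ring
          _ ≤ δ * (2*M+1) := mul_le_mul h3 h4 (abs_nonneg _) hδ.le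
          _ = (2*M+1)*δ := by ring
      calc |t*(ν₁ x)^2 + s*(ν₂ x)^2 - (t*(N₁ x)^2 + s*(N₂ x)^2)|
          = |t*((ν₁ x)^2 - (N₁ x)^2) + s*((ν₂ x)^2 - (N₂ x)^2)| := by congr 1; ring
        _ ≤ |t*((ν₁ x)^2 - (N₁ x)^2)| + |s*((ν₂ x)^2 - (N₂ x)^2)| := abs_add_le _ _
        _ = t*|(ν₁ x)^2 - (N₁ x)^2| + s*|(ν₂ x)^2 - (N₂ x)^2| := by
            rw [abs_mul, abs_mul, _root_.abs_of_nonneg ht, _root_.abs_of_nonneg hs]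
        _ ≤ t*((2*M+1)*δ) + s*((2*M+1)*δ) :=
            add_le_add (mul_le_mul_of_nonneg_left e₁ ht) (mul_le_mul_of_nonneg_left e₂ hs)
        _ = (t+s)*(2*M+1)*δ := by ring
    have hend : ∀ x ∈ Set.Icc a b, |Ψ x - Φ x| ≤ (t+s)*(2*M+1)*δ/(2*ε) := by
      intro x hx
      have h1 := sqrt_diff' hε (show (0:ℝ) ≤ t*(ν₁ x)^2 + s*(ν₂ x)^2 by positivity)
        (show (0:ℝ) ≤ t*(N₁ x)^2 + s*(N₂ x)^2 by positivity)
      have h2 : |Ψ x - Φ x| ≤ |t*(ν₁ x)^2 + s*(ν₂ x)^2 - (t*(N₁ x)^2 + s*(N₂ x)^2)|/(2*ε) := by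
        simp only [hΨdef, hΦdef]
        convert h1 using 4 <;> ring
      refine h2.trans ?_
      gcongr
      exact hXY x hx
    -- pointwise integrand estimate
    set C3 : ℝ := (t+s)*(2*M+1)*δ/(2*ε^3) with hC3def
    set G : ℝ → ℝ := fun x => (t*(M+1)/ε)*|g₁ x - ν₁' x| + (s*(M+1)/ε)*|g₂ x - ν₂' x|
        + (t*δ/ε + t*M*C3)*|ν₁' x| + (s*δ/ε + s*M*C3)*|ν₂' x| with hGdef
    have hptw : ∀ x ∈ Set.Icc a b, |D x - w x / Ψ x| ≤ G x := by
      intro x hx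
      have hΦne : Φ x ≠ 0 := (hΦpos x).ne'
      have hΨne : Ψ x ≠ 0 := (hΨpos x).ne'
      have hsplit : D x - w x / Ψ x
          = (t*N₁ x*g₁ x + s*N₂ x*g₂ x - w x)/Φ x + w x*(Ψ x - Φ x)/(Φ x*Ψ x) := by
        simp only [hDdef]
        field_simp
        ring
      have b1 : |(t*N₁ x*g₁ x + s*N₂ x*g₂ x - w x)/Φ x|
          ≤ |t*N₁ x*g₁ x + s*N₂ x*g₂ x - w x|/ε := by
        rw [abs_div, _root_.abs_of_pos (hΦpos x)]
        exact div_le_div_of_nonneg_left (abs_nonneg _) hε (hΦε x)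
      have b2 : |t*N₁ x*g₁ x + s*N₂ x*g₂ x - w x|
          ≤ t*(M+1)*|g₁ x - ν₁' x| + t*δ*|ν₁' x| + s*(M+1)*|g₂ x - ν₂' x| + s*δ*|ν₂' x| := by
        have e : t*N₁ x*g₁ x + s*N₂ x*g₂ x - w x
            = t*N₁ x*(g₁ x - ν₁' x) + t*(N₁ x - ν₁ x)*ν₁' x
              + s*N₂ x*(g₂ x - ν₂' x) + s*(N₂ x - ν₂ x)*ν₂' x := by
          simp only [hwdef]; ring
        rw [e]
        refine (abs_add_four _ _ _ _).trans ?_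
        have t1 : |t*N₁ x*(g₁ x - ν₁' x)| ≤ t*(M+1)*|g₁ x - ν₁' x| := by
          rw [abs_mul, abs_mul, _root_.abs_of_nonneg ht]
          gcongr
          exact hN₁b x hx
        have t2 : |t*(N₁ x - ν₁ x)*ν₁' x| ≤ t*δ*|ν₁' x| := by
          rw [abs_mul, abs_mul, _root_.abs_of_nonneg ht]
          gcongr
          exact hN₁cl x hx
        have t3 : |s*N₂ x*(g₂ x - ν₂' x)| ≤ s*(M+1)*|g₂ x - ν₂' x| := by
          rw [abs_mul, abs_mul, _root_.abs_of_nonneg hs]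
          gcongr
          exact hN₂b x hx
        have t4 : |s*(N₂ x - ν₂ x)*ν₂' x| ≤ s*δ*|ν₂' x| := by
          rw [abs_mul, abs_mul, _root_.abs_of_nonneg hs]
          gcongr
          exact hN₂cl x hx
        linarith
      have b3 : |w x| ≤ t*M*|ν₁' x| + s*M*|ν₂' x| := by
        have u1 : |t*ν₁ x*ν₁' x| ≤ t*M*|ν₁' x| := by
          rw [abs_mul, abs_mul, _root_.abs_of_nonneg ht]
          gcongr
          exact hMb₁ x hx
        have u2 : |s*ν₂ x*ν₂' x| ≤ s*M*|ν₂' x| := by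
          rw [abs_mul, abs_mul, _root_.abs_of_nonneg hs]
          gcongr
          exact hMb₂ x hx
        have u3 := abs_add_le (t*ν₁ x*ν₁' x) (s*ν₂ x*ν₂' x)
        simp only [hwdef]
        linarith
      have b4 : |w x*(Ψ x - Φ x)/(Φ x*Ψ x)| ≤ (t*M*|ν₁' x| + s*M*|ν₂' x|)*C3 := by
        rw [abs_div, abs_mul]
        have hd : ε*ε ≤ |Φ x*Ψ x| := by
          rw [abs_mul, _root_.abs_of_pos (hΦpos x), _root_.abs_of_pos (hΨpos x)]
          exact mul_le_mul (hΦε x) (hΨε x) hε.le (hΦpos x).le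
        calc (|w x|)*(|Ψ x - Φ x|) / (|Φ x*Ψ x|) ≤ (|w x|)*(|Ψ x - Φ x|) / (ε*ε) :=
              div_le_div_of_nonneg_left (by positivity) (by positivity) hd
          _ ≤ (t*M*|ν₁' x| + s*M*|ν₂' x|) * ((t+s)*(2*M+1)*δ/(2*ε)) / (ε*ε) := by
              have h9 := mul_le_mul b3 (hend x hx) (abs_nonneg _) (by positivity)
              rw [div_eq_mul_inv, div_eq_mul_inv]
              exact mul_le_mul_of_nonneg_right h9 (by positivity)
          _ = (t*M*|ν₁' x| + s*M*|ν₂' x|)*C3 := by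
              rw [hC3def, mul_div_assoc, div_div]
              congr 2
              ring
      calc |D x - w x / Ψ x|
          = |(t*N₁ x*g₁ x + s*N₂ x*g₂ x - w x)/Φ x + w x*(Ψ x - Φ x)/(Φ x*Ψ x)| := by
            rw [hsplit]
        _ ≤ |(t*N₁ x*g₁ x + s*N₂ x*g₂ x - w x)/Φ x| + |w x*(Ψ x - Φ x)/(Φ x*Ψ x)| :=
            abs_add_le _ _
        _ ≤ (t*(M+1)*|g₁ x - ν₁' x| + t*δ*|ν₁' x| + s*(M+1)*|g₂ x - ν₂' x| + s*δ*|ν₂' x|)/ε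
              + (t*M*|ν₁' x| + s*M*|ν₂' x|)*C3 := by
            refine add_le_add (b1.trans ?_) b4
            gcongr
        _ = G x := by
            simp only [hGdef]
            field_simp
            ring
    -- integrate the pointwise estimate
    have hII_d1 : IntervalIntegrable (fun x => |g₁ x - ν₁' x|) volume a b :=
      ((hg₁c.intervalIntegrable a b).sub (hI₁ a b)).abs
    have hII_d2 : IntervalIntegrable (fun x => |g₂ x - ν₂' x|) volume a b :=
      ((hg₂c.intervalIntegrable a b).sub (hI₂ a b)).abs
    have hII_a1 : IntervalIntegrable (fun x => |ν₁' x|) volume a b := (hI₁ a b).abs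
    have hII_a2 : IntervalIntegrable (fun x => |ν₂' x|) volume a b := (hI₂ a b).abs
    have hGII : IntervalIntegrable G volume a b := by
      apply IntervalIntegrable.add
      apply IntervalIntegrable.add
      apply IntervalIntegrable.add
      · exact hII_d1.const_mul _
      · exact hII_d2.const_mul _
      · exact hII_a1.const_mul _
      · exact hII_a2.const_mul _
    have hGint : ∫ x in a..b, G x
        = (t*(M+1)/ε)*(∫ x in a..b, |g₁ x - ν₁' x|) + (s*(M+1)/ε)*(∫ x in a..b, |g₂ x - ν₂' x|)
          + (t*δ/ε + t*M*C3)*A₁ + (s*δ/ε + s*M*C3)*A₂ := by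
      simp only [hGdef]
      rw [intervalIntegral.integral_add (((hII_d1.const_mul _).add (hII_d2.const_mul _)).add
          (hII_a1.const_mul _)) (hII_a2.const_mul _),
        intervalIntegral.integral_add ((hII_d1.const_mul _).add (hII_d2.const_mul _))
          (hII_a1.const_mul _),
        intervalIntegral.integral_add (hII_d1.const_mul _) (hII_d2.const_mul _),
        intervalIntegral.integral_const_mul, intervalIntegral.integral_const_mul,
        intervalIntegral.integral_const_mul, intervalIntegral.integral_const_mul]
    have hint : |(∫ x in a..b, D x) - ∫ x in a..b, w x / Ψ x|
        ≤ (t*(M+1)/ε)*δ + (s*(M+1)/ε)*δ + (t*δ/ε + t*M*C3)*A₁ + (s*δ/ε + s*M*C3)*A₂ := by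
      calc |(∫ x in a..b, D x) - ∫ x in a..b, w x / Ψ x|
          = |∫ x in a..b, (D x - w x / Ψ x)| := by
            rw [intervalIntegral.integral_sub (hDc.intervalIntegrable a b) hwΨII]
        _ ≤ ∫ x in a..b, |D x - w x / Ψ x| :=
            intervalIntegral.abs_integral_le_integral_abs hab
        _ ≤ ∫ x in a..b, G x :=
            intervalIntegral.integral_mono_on hab
              ((hDc.intervalIntegrable a b).sub hwΨII).abs hGII hptw
        _ = _ := hGint
        _ ≤ _ := by
            have c1 : (0:ℝ) ≤ t*(M+1)/ε := by positivity
            have c2 : (0:ℝ) ≤ s*(M+1)/ε := by positivity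
            have := mul_le_mul_of_nonneg_left hE₁ c1
            have := mul_le_mul_of_nonneg_left hE₂ c2
            linarith
    -- assemble
    have hab' : a ∈ Set.Icc a b := ⟨le_rfl, hab⟩
    have hbb' : b ∈ Set.Icc a b := ⟨hab, le_rfl⟩
    have hsplit2 : Ψ b - Ψ a - (∫ x in a..b, w x / Ψ x)
        = (Ψ b - Φ b) - (Ψ a - Φ a) + ((∫ x in a..b, D x) - ∫ x in a..b, w x / Ψ x) := by
      rw [hFTC]; ring
    have habs3 : |Ψ b - Ψ a - (∫ x in a..b, w x / Ψ x)|
        ≤ |Ψ b - Φ b| + |Ψ a - Φ a| + |(∫ x in a..b, D x) - ∫ x in a..b, w x / Ψ x| := by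
      rw [hsplit2]
      refine (abs_add_le _ _).trans ?_
      have := abs_sub (Ψ b - Φ b) (Ψ a - Φ a)
      linarith
    have hKeq : (t+s)*(2*M+1)*δ/(2*ε) + (t+s)*(2*M+1)*δ/(2*ε)
        + ((t*(M+1)/ε)*δ + (s*(M+1)/ε)*δ + (t*δ/ε + t*M*C3)*A₁ + (s*δ/ε + s*M*C3)*A₂)
        = K*δ := by
      rw [hKdef, hC3def]
      field_simp
      ring
    have e1 := hend b hbb'
    have e2 := hend a hab'
    have e3 := hint
    linarith
  -- from the δ-estimate to the equality
  have h0 : |Ψ b - Ψ a - ∫ x in a..b, w x / Ψ x| ≤ 0 := by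
    by_contra hcon
    push_neg at hcon
    set X := |Ψ b - Ψ a - ∫ x in a..b, w x / Ψ x| with hXdef
    have h1 := main (min 1 (X/(2*(K+1)))) (by positivity) (min_le_left _ _)
    have h2 : K * min 1 (X/(2*(K+1))) ≤ K * (X/(2*(K+1))) :=
      mul_le_mul_of_nonneg_left (min_le_right _ _) hK0
    have h3 : K * (X/(2*(K+1))) < X := by
      rw [show K * (X/(2*(K+1))) = X * (K/(2*(K+1))) by ring]
      have h4 : K/(2*(K+1)) < 1 := by
        rw [div_lt_one (by positivity)]
        linarith
      calc X * (K/(2*(K+1))) < X * 1 := by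
            exact mul_lt_mul_of_pos_left h4 hcon
        _ = X := mul_one X
    linarith
  have h4 : Ψ b - Ψ a - (∫ x in a..b, w x / Ψ x) = 0 :=
    abs_eq_zero.mp (le_antisymm h0 (abs_nonneg _))
  have final : Ψ b - Ψ a = ∫ x in a..b, w x / Ψ x := by linarith
  simpa only [hΨdef, hwdef] using final


lemma L1 {t s : ℝ} (ht : 0 ≤ t) (hs : 0 ≤ s) {ν₁ ν₂ ν₁' ν₂' : ℝ → ℝ}
    (hc₁ : Continuous ν₁) (hc₂ : Continuous ν₂)
    (hI₁ : ∀ a b : ℝ, IntervalIntegrable ν₁' volume a b)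
    (hI₂ : ∀ a b : ℝ, IntervalIntegrable ν₂' volume a b)
    (hF₁ : ∀ a b : ℝ, ν₁ b - ν₁ a = ∫ x in a..b, ν₁' x)
    (hF₂ : ∀ a b : ℝ, ν₂ b - ν₂ a = ∫ x in a..b, ν₂' x)
    {a b : ℝ} (hab : a ≤ b) :
    Real.sqrt (t*(ν₁ b)^2 + s*(ν₂ b)^2) - Real.sqrt (t*(ν₁ a)^2 + s*(ν₂ a)^2)
      = ∫ x in a..b, (if t*(ν₁ x)^2 + s*(ν₂ x)^2 = 0 then 0 else
          (t*ν₁ x*ν₁' x + s*ν₂ x*ν₂' x) / Real.sqrt (t*(ν₁ x)^2 + s*(ν₂ x)^2)) := by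
  set f : ℝ → ℝ := fun x => t*(ν₁ x)^2 + s*(ν₂ x)^2 with hfdef
  set w : ℝ → ℝ := fun x => t*ν₁ x*ν₁' x + s*ν₂ x*ν₂' x with hwdef
  set g : ℝ → ℝ := fun x => if f x = 0 then 0 else w x / Real.sqrt (f x) with hgdef
  have hf0 : ∀ x, 0 ≤ f x := fun x => by simp only [hfdef]; positivity
  have hfc : Continuous f := by simp only [hfdef]; fun_prop
  set e : ℕ → ℝ := fun n => 1/((n:ℝ)+1) with hedef
  have he0 : ∀ n, 0 < e n := fun n => by simp only [hedef]; positivity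
  have he : Filter.Tendsto e Filter.atTop (nhds 0) := tendsto_one_div_add_atTop_nhds_zero_nat
  set F : ℕ → ℝ → ℝ := fun n x => w x / Real.sqrt (f x + (e n)^2) with hFdef
  -- the ε-regularized identity
  have h_eq : ∀ n : ℕ, Real.sqrt (f b + (e n)^2) - Real.sqrt (f a + (e n)^2)
      = ∫ x in a..b, F n x := by
    intro n
    exact L0 ht hs hc₁ hc₂ hI₁ hI₂ hF₁ hF₂ (he0 n) hab
  -- limit of the left-hand sides
  have h1 : Filter.Tendsto (fun n => Real.sqrt (f b + (e n)^2) - Real.sqrt (f a + (e n)^2))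
      Filter.atTop (nhds (Real.sqrt (f b) - Real.sqrt (f a))) := by
    have hgc : Continuous (fun y : ℝ => Real.sqrt (f b + y^2) - Real.sqrt (f a + y^2)) := by
      apply Continuous.sub <;> exact (by fun_prop : Continuous fun y : ℝ => f _ + y^2).sqrt
    have := (hgc.tendsto 0).comp he
    simpa [Function.comp_def] using this
  -- AESM of w
  have huIoc : Set.uIoc a b = Set.Ioc a b := uIoc_of_le hab
  have hwm : AEStronglyMeasurable w (volume.restrict (Set.uIoc a b)) := by
    rw [huIoc]
    have hwII : IntervalIntegrable w volume a b := by
      apply IntervalIntegrable.add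
      · exact ((hI₁ a b).continuousOn_mul ((continuous_const.mul hc₁).continuousOn))
      · exact ((hI₂ a b).continuousOn_mul ((continuous_const.mul hc₂).continuousOn))
    exact hwII.1.aestronglyMeasurable
  -- limit of the integrals, by dominated convergence
  have h2 : Filter.Tendsto (fun n => ∫ x in a..b, F n x) Filter.atTop
      (nhds (∫ x in a..b, g x)) := by
    apply intervalIntegral.tendsto_integral_filter_of_dominated_convergence
      (bound := fun x => Real.sqrt t * |ν₁' x| + Real.sqrt s * |ν₂' x|)
    · apply Filter.Eventually.of_forall
      intro n
      have hdm : AEStronglyMeasurable (fun x => Real.sqrt (f x + (e n)^2))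
          (volume.restrict (Set.uIoc a b)) := ((hfc.add continuous_const).sqrt).aestronglyMeasurable.restrict
      exact (hwm.aemeasurable.div hdm.aemeasurable).aestronglyMeasurable
    · apply Filter.Eventually.of_forall
      intro n
      apply Filter.Eventually.of_forall
      intro x _
      have hpos : 0 < Real.sqrt (f x + (e n)^2) := by
        apply Real.sqrt_pos.mpr
        have := hf0 x
        have := he0 n
        positivity
      rw [Real.norm_eq_abs, hFdef, abs_div, _root_.abs_of_pos hpos, div_le_iff₀ hpos]
      have hcs : |w x| ≤ Real.sqrt (f x) * Real.sqrt (t*(ν₁' x)^2 + s*(ν₂' x)^2) := by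
        simpa only [hwdef, hfdef] using cs_abs ht hs (ν₁ x) (ν₁' x) (ν₂ x) (ν₂' x)
      have h3 : Real.sqrt (f x) ≤ Real.sqrt (f x + (e n)^2) :=
        Real.sqrt_le_sqrt (by nlinarith [he0 n])
      have h4 : Real.sqrt (t*(ν₁' x)^2 + s*(ν₂' x)^2)
          ≤ Real.sqrt t * |ν₁' x| + Real.sqrt s * |ν₂' x| := sqrt_two_add ht hs _ _
      calc |w x| ≤ Real.sqrt (f x) * Real.sqrt (t*(ν₁' x)^2 + s*(ν₂' x)^2) := hcs
        _ ≤ (Real.sqrt t * |ν₁' x| + Real.sqrt s * |ν₂' x|) * Real.sqrt (f x + (e n)^2) := by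
            rw [mul_comm]
            exact mul_le_mul h4 h3 (Real.sqrt_nonneg _) (by positivity)
    · exact (((hI₁ a b).abs.const_mul _).add ((hI₂ a b).abs.const_mul _))
    · apply Filter.Eventually.of_forall
      intro x _
      by_cases hfx : f x = 0
      · have hw0 : w x = 0 := by
          have h5 : t*(ν₁ x)^2 = 0 ∧ s*(ν₂ x)^2 = 0 := by
            have e1 : (0:ℝ) ≤ t*(ν₁ x)^2 := by positivity
            have e2 : (0:ℝ) ≤ s*(ν₂ x)^2 := by positivity
            have e3 : t*(ν₁ x)^2 + s*(ν₂ x)^2 = 0 := hfx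
            constructor <;> linarith
          have h6 : t*ν₁ x*ν₁' x = 0 := by
            rcases mul_eq_zero.mp h5.1 with h | h
            · rw [h]; ring
            · rw [pow_eq_zero_iff (two_ne_zero)] at h
              rw [h]; ring
          have h7 : s*ν₂ x*ν₂' x = 0 := by
            rcases mul_eq_zero.mp h5.2 with h | h
            · rw [h]; ring
            · rw [pow_eq_zero_iff (two_ne_zero)] at h
              rw [h]; ring
          simp only [hwdef, h6, h7, add_zero]
        have hFn : ∀ n, F n x = 0 := by
          intro n
          simp only [hFdef, hw0, zero_div]
        have hgx : g x = 0 := by simp only [hgdef, if_pos hfx]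
        rw [hgx]
        simp only [hFn]
        exact tendsto_const_nhds
      · have hfpos : 0 < f x := lt_of_le_of_ne (hf0 x) (Ne.symm hfx)
        have hgx : g x = w x / Real.sqrt (f x) := by simp only [hgdef, if_neg hfx]
        rw [hgx]
        have hcont : Continuous (fun y : ℝ => w x / Real.sqrt (f x + y^2)) := by
          apply Continuous.div continuous_const
          · exact (by fun_prop : Continuous fun y : ℝ => f x + y^2).sqrt
          · intro y
            have : 0 < f x + y^2 := by positivity
            exact (Real.sqrt_pos.mpr this).ne'
        have := (hcont.tendsto 0).comp he
        simpa [Function.comp_def] using this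
  have h1' : Filter.Tendsto (fun n => ∫ x in a..b, F n x) Filter.atTop
      (nhds (Real.sqrt (f b) - Real.sqrt (f a))) := by
    rw [← funext h_eq]
    exact h1
  exact tendsto_nhds_unique h1' h2


/-- convexity of `σ ↦ L(σ)` on probability measures on `S¹`:
`L(λσ₁ + (1−λ)σ₂) ≤ λ L(σ₁) + (1−λ) L(σ₂)` for `λ ∈ [0,1]`. -/
theorem statement9 (σ₁ σ₂ : Measure ℝ)
    (h1 : IsProbabilityMeasure σ₁) (h2 : IsProbabilityMeasure σ₂)
    (lam : ℝ≥0) (hlam : lam ≤ 1) :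
    circleL ((lam : ℝ≥0∞) • σ₁ + ((1 - lam : ℝ≥0) : ℝ≥0∞) • σ₂)
      ≤ (lam : ℝ≥0∞) * circleL σ₁ + ((1 - lam : ℝ≥0) : ℝ≥0∞) * circleL σ₂ := by
  by_cases hl0 : lam = 0
  · subst hl0
    simp
  by_cases hl1 : lam = 1
  · subst hl1
    simp
  -- main case
  have hlam0 : (lam : ℝ≥0∞) ≠ 0 := by exact_mod_cast hl0
  have hlt1 : lam < 1 := lt_of_le_of_ne hlam hl1
  have hsub0 : (1 - lam : ℝ≥0) ≠ 0 := by
    rw [Ne, tsub_eq_zero_iff_le]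
    exact not_le.mpr hlt1
  have hlam1 : ((1 - lam : ℝ≥0) : ℝ≥0∞) ≠ 0 := by exact_mod_cast hsub0
  by_cases hT1 : circleL σ₁ = ⊤
  · rw [hT1, ENNReal.mul_top hlam0]
    exact le_top.trans_eq (top_add _).symm
  by_cases hT2 : circleL σ₂ = ⊤
  · rw [hT2, ENNReal.mul_top hlam1]
    exact le_top.trans_eq (add_top _).symm
  apply ENNReal.le_of_forall_pos_le_add
  intro η hη _
  have hη' : (η : ℝ≥0∞) ≠ 0 := by exact_mod_cast hη.ne'
  -- extract near-optimal representations
  have h₁lt : circleL σ₁ < circleL σ₁ + η := ENNReal.lt_add_right hT1 hη'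
  have h₂lt : circleL σ₂ < circleL σ₂ + η := ENNReal.lt_add_right hT2 hη'
  conv_lhs at h₁lt => rw [circleL]
  conv_lhs at h₂lt => rw [circleL]
  obtain ⟨ν₁, h₁lt⟩ := iInf_lt_iff.mp h₁lt
  obtain ⟨ν₁', h₁lt⟩ := iInf_lt_iff.mp h₁lt
  obtain ⟨hP₁, hval₁⟩ := iInf_lt_iff.mp h₁lt
  obtain ⟨ν₂, h₂lt⟩ := iInf_lt_iff.mp h₂lt
  obtain ⟨ν₂', h₂lt⟩ := iInf_lt_iff.mp h₂lt
  obtain ⟨hP₂, hval₂⟩ := iInf_lt_iff.mp h₂lt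
  obtain ⟨hpos₁, hper₁, hII₁, hIIsq₁, hFTC₁, hmeas₁⟩ := hP₁
  obtain ⟨hpos₂, hper₂, hII₂, hIIsq₂, hFTC₂, hmeas₂⟩ := hP₂
  -- continuity of the representatives
  have hc₁ : Continuous ν₁ := by
    have e : ν₁ = fun x => ν₁ 0 + ∫ u in (0:ℝ)..x, ν₁' u := by
      funext x
      have := hFTC₁ 0 x
      linarith
    rw [e]
    exact continuous_const.add (intervalIntegral.continuous_primitive hII₁ 0)
  have hc₂ : Continuous ν₂ := by
    have e : ν₂ = fun x => ν₂ 0 + ∫ u in (0:ℝ)..x, ν₂' u := by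
      funext x
      have := hFTC₂ 0 x
      linarith
    rw [e]
    exact continuous_const.add (intervalIntegral.continuous_primitive hII₂ 0)
  set t : ℝ := (lam : ℝ) with htdef
  set s : ℝ := ((1 - lam : ℝ≥0) : ℝ) with hsdef
  have ht : 0 ≤ t := lam.coe_nonneg
  have hs : 0 ≤ s := (1 - lam).coe_nonneg
  -- the convex-combination representative
  set ν : ℝ → ℝ := fun x => Real.sqrt (t*(ν₁ x)^2 + s*(ν₂ x)^2) with hνdef
  set ν' : ℝ → ℝ := fun x => if t*(ν₁ x)^2 + s*(ν₂ x)^2 = 0 then 0 else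
      (t*ν₁ x*ν₁' x + s*ν₂ x*ν₂' x) / Real.sqrt (t*(ν₁ x)^2 + s*(ν₂ x)^2) with hν'def
  have hf0 : ∀ x, (0:ℝ) ≤ t*(ν₁ x)^2 + s*(ν₂ x)^2 := fun x => by positivity
  have hfc : Continuous (fun x => t*(ν₁ x)^2 + s*(ν₂ x)^2) := by fun_prop
  -- pointwise bounds on ν'
  have hbound : ∀ x, |ν' x| ≤ Real.sqrt t * |ν₁' x| + Real.sqrt s * |ν₂' x| := by
    intro x
    simp only [hν'def]
    by_cases hfx : t*(ν₁ x)^2 + s*(ν₂ x)^2 = 0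
    · rw [if_pos hfx, abs_zero]
      positivity
    · rw [if_neg hfx]
      have hfpos : 0 < t*(ν₁ x)^2 + s*(ν₂ x)^2 := lt_of_le_of_ne (hf0 x) (Ne.symm hfx)
      have hsq : 0 < Real.sqrt (t*(ν₁ x)^2 + s*(ν₂ x)^2) := Real.sqrt_pos.mpr hfpos
      rw [abs_div, _root_.abs_of_pos hsq, div_le_iff₀ hsq]
      calc |t*ν₁ x*ν₁' x + s*ν₂ x*ν₂' x|
          ≤ Real.sqrt (t*(ν₁ x)^2+s*(ν₂ x)^2) * Real.sqrt (t*(ν₁' x)^2+s*(ν₂' x)^2) :=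
            cs_abs ht hs _ _ _ _
        _ ≤ Real.sqrt (t*(ν₁ x)^2+s*(ν₂ x)^2) * (Real.sqrt t * |ν₁' x| + Real.sqrt s * |ν₂' x|) := by
            apply mul_le_mul_of_nonneg_left (sqrt_two_add ht hs _ _) (Real.sqrt_nonneg _)
        _ = (Real.sqrt t * |ν₁' x| + Real.sqrt s * |ν₂' x|) * Real.sqrt (t*(ν₁ x)^2+s*(ν₂ x)^2) := by
            ring
  have hbound2 : ∀ x, (ν' x)^2 ≤ t*(ν₁' x)^2 + s*(ν₂' x)^2 := by
    intro x
    simp only [hν'def]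
    by_cases hfx : t*(ν₁ x)^2 + s*(ν₂ x)^2 = 0
    · rw [if_pos hfx]
      have : (0:ℝ)^2 = 0 := by norm_num
      rw [this]
      positivity
    · rw [if_neg hfx]
      have hfpos : 0 < t*(ν₁ x)^2 + s*(ν₂ x)^2 := lt_of_le_of_ne (hf0 x) (Ne.symm hfx)
      have hsq2 : (Real.sqrt (t*(ν₁ x)^2 + s*(ν₂ x)^2))^2 = t*(ν₁ x)^2 + s*(ν₂ x)^2 :=
        Real.sq_sqrt hfpos.le
      rw [div_pow, hsq2, div_le_iff₀ hfpos]
      nlinarith [sq_nonneg (ν₁ x * ν₂' x - ν₂ x * ν₁' x), mul_nonneg ht hs,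
        sq_nonneg (ν₁ x), sq_nonneg (ν₂ x), sq_nonneg (ν₁' x), sq_nonneg (ν₂' x)]
  -- the six conditions
  have hcond1 : ∀ θ, 0 ≤ ν θ := fun θ => Real.sqrt_nonneg _
  have hcond2 : ∀ θ, ν (θ + 2*π) = ν θ := by
    intro θ
    simp only [hνdef, hper₁ θ, hper₂ θ]
  have hν'm : ∀ a b : ℝ, AEStronglyMeasurable ν' (volume.restrict (Set.Ioc a b)) := by
    intro a b
    have hwII : IntervalIntegrable (fun x => t*ν₁ x*ν₁' x + s*ν₂ x*ν₂' x) volume a b := by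
      apply IntervalIntegrable.add
      · exact ((hII₁ a b).continuousOn_mul ((continuous_const.mul hc₁).continuousOn))
      · exact ((hII₂ a b).continuousOn_mul ((continuous_const.mul hc₂).continuousOn))
    have hwm : AEStronglyMeasurable (fun x => t*ν₁ x*ν₁' x + s*ν₂ x*ν₂' x)
        (volume.restrict (Set.Ioc a b)) := hwII.1.aestronglyMeasurable
    have hq : AEStronglyMeasurable (fun x => (t*ν₁ x*ν₁' x + s*ν₂ x*ν₂' x)
        / Real.sqrt (t*(ν₁ x)^2 + s*(ν₂ x)^2)) (volume.restrict (Set.Ioc a b)) :=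
      (hwm.aemeasurable.div
        (hfc.sqrt.aestronglyMeasurable.restrict).aemeasurable).aestronglyMeasurable
    have hS : MeasurableSet {x : ℝ | t*(ν₁ x)^2 + s*(ν₂ x)^2 = 0} :=
      hfc.measurable (measurableSet_singleton 0)
    have hind : ν' = fun x => Set.indicator {x : ℝ | t*(ν₁ x)^2 + s*(ν₂ x)^2 = 0}ᶜ
        (fun x => (t*ν₁ x*ν₁' x + s*ν₂ x*ν₂' x) / Real.sqrt (t*(ν₁ x)^2 + s*(ν₂ x)^2)) x := by
      funext x
      by_cases hfx : t*(ν₁ x)^2 + s*(ν₂ x)^2 = 0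
      · simp [hν'def, hfx]
      · simp [hν'def, hfx]
    rw [hind]
    exact hq.indicator hS.compl
  have hcond3 : ∀ a b : ℝ, IntervalIntegrable ν' volume a b := by
    intro a b
    have hb : IntervalIntegrable (fun x => Real.sqrt t * |ν₁' x| + Real.sqrt s * |ν₂' x|)
        volume a b := ((hII₁ a b).abs.const_mul _).add ((hII₂ a b).abs.const_mul _)
    apply hb.mono_fun'
    · rcases le_total a b with h | h
      · rw [uIoc_of_le h]; exact hν'm a b
      · rw [uIoc_of_ge h]; exact hν'm b a
    · apply Filter.Eventually.of_forall
      intro x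
      show ‖ν' x‖ ≤ Real.sqrt t * |ν₁' x| + Real.sqrt s * |ν₂' x|
      rw [Real.norm_eq_abs]
      exact hbound x
  have hcond4 : ∀ a b : ℝ, IntervalIntegrable (fun θ => (ν' θ)^2) volume a b := by
    intro a b
    have hb : IntervalIntegrable (fun x => t*(ν₁' x)^2 + s*(ν₂' x)^2) volume a b :=
      ((hIIsq₁ a b).const_mul _).add ((hIIsq₂ a b).const_mul _)
    apply hb.mono_fun'
    · have hm : ∀ c d : ℝ, AEStronglyMeasurable (fun θ => (ν' θ)^2)
          (volume.restrict (Set.Ioc c d)) := fun c d =>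
        ((hν'm c d).aemeasurable.pow_const 2).aestronglyMeasurable
      rcases le_total a b with h | h
      · rw [uIoc_of_le h]; exact hm a b
      · rw [uIoc_of_ge h]; exact hm b a
    · apply Filter.Eventually.of_forall
      intro x
      show ‖(ν' x)^2‖ ≤ t*(ν₁' x)^2 + s*(ν₂' x)^2
      rw [Real.norm_eq_abs, _root_.abs_of_nonneg (sq_nonneg _)]
      exact hbound2 x
  have hcond5 : ∀ a b : ℝ, ν b - ν a = ∫ θ in a..b, ν' θ := by
    intro a b
    rcases le_total a b with h | h
    · exact L1 ht hs hc₁ hc₂ hII₁ hII₂ hFTC₁ hFTC₂ h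
    · have h2 := L1 ht hs hc₁ hc₂ hII₁ hII₂ hFTC₁ hFTC₂ h
      rw [intervalIntegral.integral_symm]
      simp only [hνdef, hν'def] at h2 ⊢
      linarith
  have hcond6 : (lam : ℝ≥0∞) • σ₁ + ((1 - lam : ℝ≥0) : ℝ≥0∞) • σ₂
      = (volume.restrict (Set.Ico (0:ℝ) (2*π))).withDensity
          (fun θ => ENNReal.ofReal ((ν θ)^2)) := by
    have hm₁ : Measurable (fun θ => ENNReal.ofReal ((ν₁ θ)^2)) :=
      ENNReal.measurable_ofReal.comp ((hc₁.pow 2).measurable)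
    have hm₂ : Measurable (fun θ => ENNReal.ofReal ((ν₂ θ)^2)) :=
      ENNReal.measurable_ofReal.comp ((hc₂.pow 2).measurable)
    rw [hmeas₁, hmeas₂, ← withDensity_smul _ hm₁, ← withDensity_smul _ hm₂,
      ← withDensity_add_left (hm₁.const_smul ((lam : ℝ≥0∞)))]
    congr 1
    funext θ
    have hν2 : (ν θ)^2 = t*(ν₁ θ)^2 + s*(ν₂ θ)^2 := by
      simp only [hνdef]
      exact Real.sq_sqrt (hf0 θ)
    have e₁ : (lam:ℝ≥0∞) = ENNReal.ofReal t := by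
      rw [htdef]; exact ENNReal.ofReal_coe_nnreal.symm
    have e₂ : ((1-lam:ℝ≥0):ℝ≥0∞) = ENNReal.ofReal s := by
      rw [hsdef]; exact ENNReal.ofReal_coe_nnreal.symm
    simp only [Pi.add_apply, Pi.smul_apply, smul_eq_mul, hν2]
    rw [ENNReal.ofReal_add (by positivity) (by positivity),
      ENNReal.ofReal_mul ht, ENNReal.ofReal_mul hs, e₁, e₂]
  -- conclude
  have hval : circleL ((lam : ℝ≥0∞) • σ₁ + ((1 - lam : ℝ≥0) : ℝ≥0∞) • σ₂)
      ≤ ENNReal.ofReal ((1/2) * ∫ θ in (0:ℝ)..(2*π), (ν' θ)^2) := by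
    rw [circleL]
    exact iInf_le_of_le ν (iInf_le_of_le ν'
      (iInf_le_of_le ⟨hcond1, hcond2, hcond3, hcond4, hcond5, hcond6⟩ le_rfl))
  have h2π : (0:ℝ) ≤ 2*π := by positivity
  have hIsum : ∫ θ in (0:ℝ)..(2*π), (ν' θ)^2
      ≤ t * (∫ θ in (0:ℝ)..(2*π), (ν₁' θ)^2) + s * (∫ θ in (0:ℝ)..(2*π), (ν₂' θ)^2) := by
    have h5 := intervalIntegral.integral_mono_on h2π (hcond4 0 (2*π))
      (((hIIsq₁ 0 (2*π)).const_mul t).add ((hIIsq₂ 0 (2*π)).const_mul s))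
      (fun x _ => hbound2 x)
    rwa [intervalIntegral.integral_add ((hIIsq₁ 0 (2*π)).const_mul t)
        ((hIIsq₂ 0 (2*π)).const_mul s),
      intervalIntegral.integral_const_mul, intervalIntegral.integral_const_mul] at h5
  have hJ₁0 : 0 ≤ ∫ θ in (0:ℝ)..(2*π), (ν₁' θ)^2 :=
    intervalIntegral.integral_nonneg h2π (fun x _ => sq_nonneg _)
  have hJ₂0 : 0 ≤ ∫ θ in (0:ℝ)..(2*π), (ν₂' θ)^2 :=
    intervalIntegral.integral_nonneg h2π (fun x _ => sq_nonneg _)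
  have hval2 : ENNReal.ofReal ((1/2) * ∫ θ in (0:ℝ)..(2*π), (ν' θ)^2)
      ≤ (lam:ℝ≥0∞) * ENNReal.ofReal ((1/2) * ∫ θ in (0:ℝ)..(2*π), (ν₁' θ)^2)
        + ((1-lam:ℝ≥0):ℝ≥0∞) * ENNReal.ofReal ((1/2) * ∫ θ in (0:ℝ)..(2*π), (ν₂' θ)^2) := by
    have e₁ : (lam:ℝ≥0∞) = ENNReal.ofReal t := by
      rw [htdef]; exact ENNReal.ofReal_coe_nnreal.symm
    have e₂ : ((1-lam:ℝ≥0):ℝ≥0∞) = ENNReal.ofReal s := by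
      rw [hsdef]; exact ENNReal.ofReal_coe_nnreal.symm
    rw [e₁, e₂, ← ENNReal.ofReal_mul ht, ← ENNReal.ofReal_mul hs,
      ← ENNReal.ofReal_add (mul_nonneg ht (by linarith)) (mul_nonneg hs (by linarith))]
    apply ENNReal.ofReal_le_ofReal
    linarith
  calc circleL ((lam : ℝ≥0∞) • σ₁ + ((1 - lam : ℝ≥0) : ℝ≥0∞) • σ₂)
      ≤ ENNReal.ofReal ((1/2) * ∫ θ in (0:ℝ)..(2*π), (ν' θ)^2) := hval
    _ ≤ (lam:ℝ≥0∞) * ENNReal.ofReal ((1/2) * ∫ θ in (0:ℝ)..(2*π), (ν₁' θ)^2)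
        + ((1-lam:ℝ≥0):ℝ≥0∞) * ENNReal.ofReal ((1/2) * ∫ θ in (0:ℝ)..(2*π), (ν₂' θ)^2) := hval2
    _ ≤ (lam:ℝ≥0∞) * (circleL σ₁ + η) + ((1-lam:ℝ≥0):ℝ≥0∞) * (circleL σ₂ + η) := by
        exact add_le_add (mul_le_mul_right hval₁.le _) (mul_le_mul_right hval₂.le _)
    _ = ((lam:ℝ≥0∞) * circleL σ₁ + ((1-lam:ℝ≥0):ℝ≥0∞) * circleL σ₂)
        + (((lam:ℝ≥0∞) + ((1-lam:ℝ≥0):ℝ≥0∞)) * η) := by ring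
    _ = (lam:ℝ≥0∞) * circleL σ₁ + ((1-lam:ℝ≥0):ℝ≥0∞) * circleL σ₂ + η := by
        rw [← ENNReal.coe_add, add_tsub_cancel_of_le hlam, ENNReal.coe_one, one_mul]
end

section
/- Let ρ be a positive measure on S^1 × [0,∞) with disintegration into probability measures (ρ_t), and suppose there exists ε > 0 such that the set E = {t : L(ρ_t) > ε} has finite Lebesgue measure, and that for every t ∉ E, the Poisson integral satisfies P_𝔻[ρ_t](w) ≥ 1/(4π) for all w ∈ 𝔻. Let g_t solve ∂_t g_t(z) = g_t(z)H_t(g_t(z)) with H_t the Herglotz integral of ρ_t and g_0(z)=z. Then for every z ∈ 𝔻∖{0}, the blow-up time τ(z) = sup{t : the flow exists up to t} satisfies τ(z) ≤ −2log|z| + |E|. -/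
open MeasureTheory Metric Real Complex Set
open scoped Real ENNReal NNReal

lemma exp_norm_one (θ : ℝ) : ‖Complex.exp ((θ : ℂ) * Complex.I)‖ = 1 := by
  simp [Complex.norm_exp]

lemma exp_sub_ne (θ : ℝ) (w : ℂ) (hw : ‖w‖ < 1) :
    Complex.exp ((θ : ℂ) * Complex.I) - w ≠ 0 := by
  intro h
  have := exp_norm_one θ
  rw [sub_eq_zero] at h
  rw [h] at this
  linarith

lemma re_herglotz_kernel (θ : ℝ) (w : ℂ) (hw : ‖w‖ < 1) :
    ((Complex.exp ((θ : ℂ) * Complex.I) + w) /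
      (Complex.exp ((θ : ℂ) * Complex.I) - w)).re = poissonK w θ := by
  set e := Complex.exp ((θ : ℂ) * Complex.I) with he
  have h1 : Complex.normSq e = 1 := by
    have := exp_norm_one θ
    rw [← Complex.sq_norm, this]; norm_num
  have hne : e - w ≠ 0 := exp_sub_ne θ w hw
  have hns : Complex.normSq (e - w) ≠ 0 := by
    simpa [Complex.normSq_eq_zero] using hne
  rw [Complex.div_re, poissonK]
  rw [show ‖e - w‖ ^ 2 = Complex.normSq (e - w) by
    rw [Complex.sq_norm]]
  rw [show ‖w‖ ^ 2 = Complex.normSq w by rw [Complex.sq_norm]]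
  have h1' : e.re * e.re + e.im * e.im = 1 := by
    have := h1; rwa [Complex.normSq_apply] at this
  rw [← add_div]
  congr 1
  simp only [Complex.add_re, Complex.sub_re, Complex.add_im, Complex.sub_im,
    Complex.normSq_apply]
  nlinarith [h1']


lemma herglotz_integrable (σ : Measure ℝ) [IsProbabilityMeasure σ] (w : ℂ) (hw : ‖w‖ < 1) :
    Integrable (fun θ : ℝ => (Complex.exp ((θ : ℂ) * Complex.I) + w) /
      (Complex.exp ((θ : ℂ) * Complex.I) - w)) σ := by
  have hce : Continuous fun θ : ℝ => Complex.exp ((θ : ℂ) * Complex.I) :=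
    Complex.continuous_exp.comp (Complex.continuous_ofReal.mul continuous_const)
  have hc : Continuous fun θ : ℝ => (Complex.exp ((θ : ℂ) * Complex.I) + w) /
      (Complex.exp ((θ : ℂ) * Complex.I) - w) :=
    (hce.add continuous_const).div (hce.sub continuous_const)
      (fun θ => exp_sub_ne θ w hw)
  refine Integrable.mono' (integrable_const ((1 + ‖w‖) / (1 - ‖w‖)))
    hc.aestronglyMeasurable (Filter.Eventually.of_forall fun θ => ?_)
  rw [norm_div]
  have h1 : ‖Complex.exp ((θ : ℂ) * Complex.I) + w‖ ≤ 1 + ‖w‖ := by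
    calc ‖Complex.exp ((θ : ℂ) * Complex.I) + w‖ ≤
        ‖Complex.exp ((θ : ℂ) * Complex.I)‖ + ‖w‖ := norm_add_le _ _
      _ = 1 + ‖w‖ := by rw [exp_norm_one]
  have h2 : 1 - ‖w‖ ≤ ‖Complex.exp ((θ : ℂ) * Complex.I) - w‖ := by
    have := norm_sub_norm_le (Complex.exp ((θ : ℂ) * Complex.I)) w
    rw [exp_norm_one] at this
    linarith [le_abs_self (1 - ‖w‖), abs_sub_abs_le_abs_sub (1:ℝ) ‖w‖]
  exact div_le_div₀ (by positivity) h1 (by linarith) h2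

lemma herglotz_re (σ : Measure ℝ) [IsProbabilityMeasure σ] (w : ℂ) (hw : ‖w‖ < 1) :
    (herglotz σ w).re = ∫ θ, poissonK w θ ∂σ := by
  rw [herglotz]
  rw [show (∫ θ : ℝ, (Complex.exp ((θ : ℂ) * Complex.I) + w) /
      (Complex.exp ((θ : ℂ) * Complex.I) - w) ∂σ).re = Complex.reCLM
      (∫ θ : ℝ, (Complex.exp ((θ : ℂ) * Complex.I) + w) /
      (Complex.exp ((θ : ℂ) * Complex.I) - w) ∂σ) from rfl]
  rw [← Complex.reCLM.integral_comp_comm (herglotz_integrable σ w hw)]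
  refine integral_congr_ae (Filter.Eventually.of_forall fun θ => ?_)
  simp only [Complex.reCLM_apply]
  exact re_herglotz_kernel θ w hw

lemma poissonK_nonneg (w : ℂ) (hw : ‖w‖ ≤ 1) (θ : ℝ) : 0 ≤ poissonK w θ := by
  rw [poissonK]
  apply div_nonneg
  · nlinarith [norm_nonneg w]
  · positivity

/-- suppose `E = {t ≥ 0 : L(ρ_t) > ε}` has finite Lebesgue measure and
`P_𝔻[ρ_t] ≥ 1/(4π)` on `𝔻` for every `t ∉ E`.  If the Loewner–Kufarev flow
`∂_t g_t(z) = g_t(z) H_t(g_t(z))`, `g_0(z) = z`, stays in `𝔻` on `[0,τ)` for a point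
`z ∈ 𝔻 ∖ {0}`, then `τ ≤ −2 log |z| + |E|`. -/
theorem statement18 (ρ : ℝ → Measure ℝ) (hprob : ∀ t, IsProbabilityMeasure (ρ t))
    (ε : ℝ) (hε : 0 < ε)
    (E : Set ℝ) (hE : E = {t : ℝ | 0 ≤ t ∧ ENNReal.ofReal ε < circleL (ρ t)})
    (hEfin : volume E < ⊤)
    (hPois : ∀ t : ℝ, 0 ≤ t → t ∉ E → ∀ w ∈ ball (0:ℂ) 1,
      1 / (4 * π) ≤ (1 / (2 * π)) * ∫ θ, poissonK w θ ∂(ρ t))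
    (g : ℝ → ℂ → ℂ) (z : ℂ) (hz : z ∈ ball (0:ℂ) 1) (hz0 : z ≠ 0)
    (τ : ℝ) (hτ : 0 ≤ τ)
    (hg0 : g 0 z = z)
    (hflow : ∀ t ∈ Set.Ico (0:ℝ) τ, g t z ∈ ball (0:ℂ) 1 ∧
      HasDerivAt (fun s => g s z) (g t z * herglotz (ρ t) (g t z)) t) :
    τ ≤ -2 * Real.log ‖z‖ + (volume E).toReal := by
  by_contra hcon
  push_neg at hcon
  have hzlt : ‖z‖ < 1 := by simpa using hz
  have hzpos : 0 < ‖z‖ := norm_pos_iff.mpr hz0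
  have hlogz : Real.log ‖z‖ < 0 := Real.log_neg hzpos hzlt
  set B := -2 * Real.log ‖z‖ + (volume E).toReal with hBdef
  have hBpos : 0 < B := by
    have : (0:ℝ) ≤ (volume E).toReal := ENNReal.toReal_nonneg
    rw [hBdef]; linarith
  -- basic facts about the flow
  have hGball : ∀ s ∈ Set.Ico (0:ℝ) τ, ‖g s z‖ < 1 := fun s hs =>
    mem_ball_zero_iff.mp (hflow s hs).1
  have hHre : ∀ s ∈ Set.Ico (0:ℝ) τ,
      (herglotz (ρ s) (g s z)).re = ∫ θ, poissonK (g s z) θ ∂(ρ s) := fun s hs =>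
    herglotz_re (ρ s) (g s z) (hGball s hs)
  have hHnn : ∀ s ∈ Set.Ico (0:ℝ) τ, 0 ≤ (herglotz (ρ s) (g s z)).re := by
    intro s hs
    rw [hHre s hs]
    exact integral_nonneg fun θ => poissonK_nonneg _ (hGball s hs).le θ
  -- derivative of w s = normSq (g s z)
  set w : ℝ → ℝ := fun s => Complex.normSq (g s z) with hwdef
  have hwderiv : ∀ s ∈ Set.Ico (0:ℝ) τ,
      HasDerivAt w (2 * w s * (herglotz (ρ s) (g s z)).re) s := by
    intro s hs
    have hG := (hflow s hs).2
    have hre : HasDerivAt (fun r => (g r z).re)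
        (Complex.reCLM (g s z * herglotz (ρ s) (g s z))) s :=
      Complex.reCLM.hasFDerivAt.comp_hasDerivAt s hG
    have him : HasDerivAt (fun r => (g r z).im)
        (Complex.imCLM (g s z * herglotz (ρ s) (g s z))) s :=
      Complex.imCLM.hasFDerivAt.comp_hasDerivAt s hG
    have hkey := (hre.mul hre).add (him.mul him)
    have hfun : w = fun r => (g r z).re * (g r z).re + (g r z).im * (g r z).im :=
      funext fun r => Complex.normSq_apply _
    rw [hfun]
    refine hkey.congr_deriv ?_
    simp only [Complex.reCLM_apply, Complex.imCLM_apply, Complex.mul_re, Complex.mul_im,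
      hwdef, Complex.normSq_apply]
    ring
  -- key step: every 0 < t < τ satisfies t ≤ B
  have key : ∀ t : ℝ, 0 < t → t < τ → t ≤ B := by
    intro t ht0 htτ
    have hsub : Set.Icc (0:ℝ) t ⊆ Set.Ico (0:ℝ) τ := fun x hx =>
      ⟨hx.1, lt_of_le_of_lt hx.2 htτ⟩
    have hwc : ContinuousOn w (Set.Icc 0 t) := fun x hx =>
      ((hwderiv x (hsub hx)).continuousAt).continuousWithinAt
    have hmono : MonotoneOn w (Set.Icc 0 t) := by
      apply monotoneOn_of_deriv_nonneg (convex_Icc 0 t) hwc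
      · intro x hx
        rw [interior_Icc] at hx
        exact ((hwderiv x (hsub (Set.Ioo_subset_Icc_self hx))).differentiableAt).differentiableWithinAt
      · intro x hx
        rw [interior_Icc] at hx
        rw [(hwderiv x (hsub (Set.Ioo_subset_Icc_self hx))).deriv]
        have h1 := hHnn x (hsub (Set.Ioo_subset_Icc_self hx))
        have h2 : (0:ℝ) ≤ w x := Complex.normSq_nonneg _
        positivity
    have hw0 : w 0 = Complex.normSq z := by simp [hwdef, hg0]
    have hwz : 0 < Complex.normSq z := Complex.normSq_pos.mpr hz0
    have hwpos : ∀ x ∈ Set.Icc (0:ℝ) t, 0 < w x := by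
      intro x hx
      have := hmono (Set.left_mem_Icc.mpr ht0.le) hx hx.1
      rw [hw0] at this
      linarith
    -- u = log ∘ w and its derivative
    set u : ℝ → ℝ := fun s => Real.log (w s) with hudef
    set D : ℝ → ℝ := fun s => 2 * (herglotz (ρ s) (g s z)).re with hDdef
    have huderiv : ∀ x ∈ Set.Icc (0:ℝ) t, HasDerivAt u (D x) x := by
      intro x hx
      have h := (hwderiv x (hsub hx)).log (hwpos x hx).ne'
      convert h using 1
      rw [hDdef]
      field_simp [(hwpos x hx).ne']
    have huc : ContinuousOn u (Set.Icc 0 t) := fun x hx =>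
      ((huderiv x hx).continuousAt).continuousWithinAt
    -- the comparison function φ
    set F := toMeasurable volume E with hFdef
    have hFmeas : MeasurableSet F := measurableSet_toMeasurable _ _
    have hEF : E ⊆ F := subset_toMeasurable _ _
    have hvolF : volume F = volume E := measure_toMeasurable _
    set φ : ℝ → ℝ := Set.indicator Fᶜ (fun _ => (1:ℝ)) with hφdef
    have hφint : IntegrableOn φ (Set.Icc 0 t) := by
      refine Integrable.indicator ?_ hFmeas.compl
      exact integrableOn_const (by simp [Real.volume_Icc])
    have hφle : ∀ x ∈ Set.Ioo (0:ℝ) t, φ x ≤ D x := by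
      intro x hx
      by_cases hxF : x ∈ F
      · have h0 : φ x = 0 := by simp [hφdef, hxF]
        rw [h0]
        show (0:ℝ) ≤ 2 * (herglotz (ρ x) (g x z)).re
        have := hHnn x (hsub (Set.Ioo_subset_Icc_self hx))
        linarith
      · have hφx : φ x = 1 := by simp [hφdef, hxF]
        have hxE : x ∉ E := fun h => hxF (hEF h)
        have hPx := hPois x hx.1.le hxE (g x z)
          (hflow x (hsub (Set.Ioo_subset_Icc_self hx))).1
        have hπ : (0:ℝ) < π := Real.pi_pos
        have hI : (1:ℝ)/2 ≤ ∫ θ, poissonK (g x z) θ ∂(ρ x) := by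
          have h := mul_le_mul_of_nonneg_left hPx
            (le_of_lt (by positivity : (0:ℝ) < 2*π))
          rw [show (2*π) * ((1:ℝ)/(4*π)) = 1/2 by field_simp; ring] at h
          rw [show (2*π) * ((1:ℝ)/(2*π) * ∫ θ, poissonK (g x z) θ ∂(ρ x)) =
            ∫ θ, poissonK (g x z) θ ∂(ρ x) by field_simp] at h
          exact h
        rw [hφx]
        show (1:ℝ) ≤ 2 * (herglotz (ρ x) (g x z)).re
        rw [hHre x (hsub (Set.Ioo_subset_Icc_self hx))]
        linarith
    -- FTC comparison
    have hint : (∫ y in (0:ℝ)..t, φ y) ≤ u t - u 0 :=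
      intervalIntegral.integral_le_sub_of_hasDeriv_right_of_le ht0.le huc
        (fun x hx => (huderiv x (Set.Ioo_subset_Icc_self hx)).hasDerivWithinAt)
        hφint hφle
    -- compute the integral of φ
    have hφval : (∫ y in (0:ℝ)..t, φ y) = (volume (Fᶜ ∩ Set.Ioc 0 t)).toReal := by
      rw [intervalIntegral.integral_of_le ht0.le, hφdef,
        integral_indicator hFmeas.compl, setIntegral_const]
      simp [Measure.restrict_apply hFmeas.compl]
      rfl
    -- lower bound on the measure
    have hmeas_lb : t - (volume E).toReal ≤ (volume (Fᶜ ∩ Set.Ioc 0 t)).toReal := by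
      have hcover : Set.Ioc (0:ℝ) t ⊆ (Fᶜ ∩ Set.Ioc 0 t) ∪ (F ∩ Set.Ioc 0 t) := by
        intro x hx
        by_cases h : x ∈ F
        · exact Or.inr ⟨h, hx⟩
        · exact Or.inl ⟨h, hx⟩
      have hfin1 : volume (Fᶜ ∩ Set.Ioc 0 t) < ⊤ :=
        lt_of_le_of_lt (measure_mono Set.inter_subset_right)
          (by rw [Real.volume_Ioc]; exact ENNReal.ofReal_lt_top)
      have hfin2 : volume (F ∩ Set.Ioc 0 t) < ⊤ :=
        lt_of_le_of_lt (measure_mono Set.inter_subset_left) (hvolF ▸ hEfin)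
      have h1 : volume (Set.Ioc (0:ℝ) t) ≤
          volume (Fᶜ ∩ Set.Ioc 0 t) + volume (F ∩ Set.Ioc 0 t) :=
        le_trans (measure_mono hcover) (measure_union_le _ _)
      have h2 : (volume (Set.Ioc (0:ℝ) t)).toReal ≤
          (volume (Fᶜ ∩ Set.Ioc 0 t)).toReal + (volume (F ∩ Set.Ioc 0 t)).toReal := by
        rw [← ENNReal.toReal_add hfin1.ne hfin2.ne]
        exact ENNReal.toReal_mono (by simp [hfin1.ne, hfin2.ne]) h1
      have h3 : (volume (Set.Ioc (0:ℝ) t)).toReal = t := by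
        rw [Real.volume_Ioc, sub_zero, ENNReal.toReal_ofReal ht0.le]
      have h4 : (volume (F ∩ Set.Ioc 0 t)).toReal ≤ (volume E).toReal := by
        apply ENNReal.toReal_mono hEfin.ne
        rw [← hvolF]
        exact measure_mono Set.inter_subset_left
      linarith
    -- upper bound: u t - u 0 ≤ -2 log ‖z‖
    have hut : u t ≤ 0 := by
      apply Real.log_nonpos (Complex.normSq_nonneg _)
      have h := hGball t ⟨ht0.le, htτ⟩
      show Complex.normSq (g t z) ≤ 1
      rw [show Complex.normSq (g t z) = ‖g t z‖ ^ 2 by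
        rw [← Complex.sq_norm]]
      nlinarith [norm_nonneg (g t z)]
    have hu0 : u 0 = 2 * Real.log ‖z‖ := by
      have h1 : u 0 = Real.log (Complex.normSq z) := by
        show Real.log (w 0) = _
        rw [hw0]
      rw [h1, show Complex.normSq z = ‖z‖ ^ 2 by rw [← Complex.sq_norm],
        Real.log_pow]
      push_cast; ring
    rw [hφval] at hint
    rw [hBdef]
    linarith
  -- conclude
  set t := (B + τ)/2 with htdef
  have ht1 : B < t := by rw [htdef]; linarith
  have ht2 : t < τ := by rw [htdef]; linarith
  have ht0 : 0 < t := lt_trans hBpos ht1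
  have := key t ht0 ht2
  linarith
end
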